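/- Let n ≥ k ≥ 2, let 𝔽 be a field and let S_k ⊆ C([n],k). If the k-hyperclique complex ⟨S_k⟩ is D-perfect, then the simplicial matroid Sim_k^n(S_k) is strongly triangulable over 𝔽. -/

import Mathlib

/-!
Common definitions for simplicial matroids, following Cordovil–Lemos–Linhares Sales,
"Dirac's theorem on simplicial matroids".

We model `[n] = {1,…,n}` by `Fin n`, and a subset of `[n]` by a `Finset (Fin n)`.
A family `S_k ⊆ C([n],k)` is a `Finset (Finset (Fin n))` (all of whose members
have cardinality `k`, which is imposed by hypotheses in the theorems).
-/

open Finset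

/-- The incidence number `[F' : F]`: if `F = i₁ < i₂ < ⋯ < iₘ` and `F' = F \ {iⱼ}`
then `[F' : F] = (-1)ʲ` (with `j` the 1-based position of the deleted element),
and `[F' : F] = 0` otherwise. -/
def inc {n : ℕ} (F' F : Finset (Fin n)) : ℤ :=
  ∑ i ∈ F, if F' = F.erase i then (-1 : ℤ) ^ (F.filter (fun j => j ≤ i)).card else 0

/-- The family `C([n], m)` of `m`-element subsets of `[n]`, as a type. -/
abbrev Csets (n m : ℕ) := {F : Finset (Fin n) // F.card = m}

/-- `∂_k F`, the boundary of a single `k`-subset `F` of `[n]`,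
as a vector of `𝔽^{C([n],k-1)}`. -/
def bvec (𝔽 : Type*) [Field 𝔽] (n k : ℕ) (F : Finset (Fin n)) : Csets n (k - 1) → 𝔽 :=
  fun F' => ((inc F'.1 F : ℤ) : 𝔽)

/-- Independence in the simplicial matroid `Sim_k^n(S_k)` over `𝔽`:
`X ⊆ S_k` is independent iff the vectors `∂_k F`, `F ∈ X`, are linearly independent. -/
def SimIndep (𝔽 : Type*) [Field 𝔽] (n k : ℕ) (Sk X : Finset (Finset (Fin n))) : Prop :=
  X ⊆ Sk ∧ LinearIndependent 𝔽 (fun F : X => bvec 𝔽 n k F.1)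

/-- A circuit of `Sim_k^n(S_k)`: a minimal dependent subset of the ground set. -/
def SimCircuit (𝔽 : Type*) [Field 𝔽] (n k : ℕ) (Sk C : Finset (Finset (Fin n))) : Prop :=
  C ⊆ Sk ∧ ¬ LinearIndependent 𝔽 (fun F : C => bvec 𝔽 n k F.1) ∧
    ∀ C' ⊂ C, LinearIndependent 𝔽 (fun F : C' => bvec 𝔽 n k F.1)

/-- The rank (in `Sim_k^n`) of a set `X` of `k`-subsets of `[n]`:
the dimension of the span of the boundaries of its members. -/
noncomputable def simRank (𝔽 : Type*) [Field 𝔽] (n k : ℕ) (X : Finset (Finset (Fin n))) : ℕ :=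
  Module.finrank 𝔽 (Submodule.span 𝔽 ((fun F => bvec 𝔽 n k F) '' (X : Set (Finset (Fin n)))))

/-- A cocircuit of `Sim_k^n(S_k)`, i.e. a circuit of the dual matroid:
a minimal set `C ⊆ S_k` whose complement does not span (`X` is independent in the dual
matroid iff `r(E ∖ X) = r(E)`). -/
def SimCocircuit (𝔽 : Type*) [Field 𝔽] (n k : ℕ) (Sk C : Finset (Finset (Fin n))) : Prop :=
  C ⊆ Sk ∧ simRank 𝔽 n k (Sk \ C) < simRank 𝔽 n k Sk ∧
    ∀ C' ⊂ C, simRank 𝔽 n k (Sk \ C') = simRank 𝔽 n k Sk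

/-- The boundary map `∂_k : 𝔽^{S_k} → 𝔽^{C([n],k-1)}`. -/
noncomputable def bdryMap (𝔽 : Type*) [Field 𝔽] (n k : ℕ) (Sk : Finset (Finset (Fin n))) :
    (↥Sk → 𝔽) →ₗ[𝔽] (Csets n (k - 1) → 𝔽) :=
  Matrix.mulVecLin (Matrix.of fun (F' : Csets n (k - 1)) (F : ↥Sk) => ((inc F'.1 F.1 : ℤ) : 𝔽))

/-- The coboundary `δ^{k-1} V` of a `(k-1)`-subset `V` of `[n]`,
as a vector of `𝔽^{S_k}`; its `F`-coordinate is `[V : F]`. -/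
def cobdry (𝔽 : Type*) [Field 𝔽] {n : ℕ} (Sk : Finset (Finset (Fin n)))
    (V : Finset (Fin n)) : ↥Sk → 𝔽 :=
  fun F => ((inc V F.1 : ℤ) : 𝔽)

/-- The boundary `∂_{k+1} X` of a `(k+1)`-subset `X` of `[n]`, regarded as a vector
of `𝔽^{S_k}`; its `F`-coordinate is `[F : X]`. -/
def pbdry (𝔽 : Type*) [Field 𝔽] {n : ℕ} (Sk : Finset (Finset (Fin n)))
    (X : Finset (Fin n)) : ↥Sk → 𝔽 :=
  fun F => ((inc F.1 X : ℤ) : 𝔽)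

open scoped Classical in
/-- The support of a vector of `𝔽^{S_k}`, as a set of `k`-subsets of `[n]`. -/
noncomputable def suppFin {𝔽 : Type*} [Field 𝔽] {n : ℕ} {Sk : Finset (Finset (Fin n))}
    (v : ↥Sk → 𝔽) : Finset (Finset (Fin n)) :=
  (Sk.attach.filter fun F => v F ≠ 0).image Subtype.val

/-- `supp(δ^{k-1} V) ⊆ S_k`. -/
noncomputable def suppδ (𝔽 : Type*) [Field 𝔽] {n : ℕ} (Sk : Finset (Finset (Fin n)))
    (V : Finset (Fin n)) : Finset (Finset (Fin n)) :=
  suppFin (cobdry 𝔽 Sk V)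

/-- The cocircuit space of `Sim_k^n(S_k)`: the orthogonal complement, with respect to the
standard bilinear form on `𝔽^{S_k}`, of the circuit space `ker ∂_k`. -/
noncomputable def cocircSpace (𝔽 : Type*) [Field 𝔽] (n k : ℕ) (Sk : Finset (Finset (Fin n))) :
    Submodule 𝔽 (↥Sk → 𝔽) where
  carrier := {w | ∀ v ∈ LinearMap.ker (bdryMap 𝔽 n k Sk), ∑ F, v F * w F = 0}
  zero_mem' := by intro v hv; simp
  add_mem' := by
    intro a b ha hb v hv
    have h1 := ha v hv
    have h2 := hb v hv
    simp only [Pi.add_apply, mul_add, Finset.sum_add_distrib]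
    rw [h1, h2, add_zero]
  smul_mem' := by
    intro c w hw v hv
    have h := hw v hv
    simp only [Pi.smul_apply, smul_eq_mul]
    calc ∑ F, v F * (c * w F) = ∑ F, c * (v F * w F) := by
          exact Finset.sum_congr rfl fun F _ => by ring
      _ = c * ∑ F, v F * w F := (Finset.mul_sum _ _ _).symm
      _ = 0 := by rw [h, mul_zero]

/-- The faces of the `k`-hyperclique complex `⟨S_k⟩`: all `F ⊆ [n]` with `|F| < k`,
together with all `F` every `k`-element subset of which lies in `S_k`. -/
def IsFace {n : ℕ} (k : ℕ) (Sk : Finset (Finset (Fin n))) (F : Finset (Fin n)) : Prop :=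
  F.card < k ∨ ∀ G ⊆ F, G.card = k → G ∈ Sk

/-- A facet of `⟨S_k⟩`: an inclusion-maximal face. -/
def IsFacet {n : ℕ} (k : ℕ) (Sk : Finset (Finset (Fin n))) (F : Finset (Fin n)) : Prop :=
  IsFace k Sk F ∧ ∀ G, IsFace k Sk G → F ⊆ G → F = G

/-- `V` is simplicial in `⟨S_k⟩` if there is exactly one facet `X` of `⟨S_k⟩`
with `V ⊊ X`. -/
def SimplicialFace {n : ℕ} (k : ℕ) (Sk : Finset (Finset (Fin n))) (V : Finset (Fin n)) : Prop :=
  ∃! X, IsFacet k Sk X ∧ V ⊂ X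

/-- The `k`-skeleta of the complexes `Δ_0 = ⟨S_k⟩`, `Δ_{j+1} = Δ_j ∖∖ V_j`, where
`Δ ∖∖ V = ⟨(skeleton of Δ) ∖ supp(δ^{k-1} V)⟩` (0-indexed). -/
noncomputable def delSeq (𝔽 : Type*) [Field 𝔽] {n : ℕ} (Sk : Finset (Finset (Fin n)))
    (V : ℕ → Finset (Fin n)) : ℕ → Finset (Finset (Fin n))
  | 0 => Sk
  | j + 1 => delSeq 𝔽 Sk V j \ suppδ 𝔽 (delSeq 𝔽 Sk V j) (V j)

/-- `C*_j := supp(δ^{k-1} V_j) ∖ ⋃_{i<j} supp(δ^{k-1} V_i)` (0-indexed). -/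
noncomputable def Cstar (𝔽 : Type*) [Field 𝔽] {n : ℕ} (Sk : Finset (Finset (Fin n)))
    (V : ℕ → Finset (Fin n)) (j : ℕ) : Finset (Finset (Fin n)) :=
  suppδ 𝔽 Sk (V j) \ (Finset.range j).biUnion (fun i => suppδ 𝔽 Sk (V i))

/-- `(V_1,…,V_r)` (0-indexed: `V 0, …, V (r-1)`) is a basic linear sequence for `⟨S_k⟩`,
where `r` is the rank of `Sim_k^n(S_k)`: each `V_j` is a `(k-1)`-subset of `[n]` and each
`C*_j` is a cocircuit of `Sim_k^n(S_k(Δ_{j-1}))`. -/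
def BasicLinearSeq (𝔽 : Type*) [Field 𝔽] (n k : ℕ) (Sk : Finset (Finset (Fin n))) (r : ℕ)
    (V : ℕ → Finset (Fin n)) : Prop :=
  simRank 𝔽 n k Sk = r ∧ (∀ j < r, (V j).card = k - 1) ∧
    ∀ j < r, SimCocircuit 𝔽 n k (delSeq 𝔽 Sk V j) (Cstar 𝔽 Sk V j)

/-- `⟨S_k⟩` is D-perfect: there is a basic linear sequence `V_1,…,V_r` such that each `V_j`
is simplicial in `Δ_{j-1}`. -/
def DPerfect (𝔽 : Type*) [Field 𝔽] (n k : ℕ) (Sk : Finset (Finset (Fin n))) : Prop :=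
  ∃ V : ℕ → Finset (Fin n),
    BasicLinearSeq 𝔽 n k Sk (simRank 𝔽 n k Sk) V ∧
      ∀ j < simRank 𝔽 n k Sk, SimplicialFace k (delSeq 𝔽 Sk V j) (V j)

/-- A flat of `Sim_k^n(S_k)`: a closed subset of the ground set. -/
def SimFlat (𝔽 : Type*) [Field 𝔽] (n k : ℕ) (Sk X : Finset (Finset (Fin n))) : Prop :=
  X ⊆ Sk ∧ ∀ F ∈ Sk,
    bvec 𝔽 n k F ∈ Submodule.span 𝔽 ((fun G => bvec 𝔽 n k G) '' (X : Set (Finset (Fin n)))) →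
      F ∈ X

/-- A hyperplane of `Sim_k^n(S_k)`: a flat of rank one less than the rank of the matroid. -/
def SimHyperplane (𝔽 : Type*) [Field 𝔽] (n k : ℕ) (Sk H : Finset (Finset (Fin n))) : Prop :=
  SimFlat 𝔽 n k Sk H ∧ simRank 𝔽 n k H + 1 = simRank 𝔽 n k Sk

/-- A modular flat of `Sim_k^n(S_k)`:
`r(X) + r(Y) = r(X ∪ Y) + r(X ∩ Y)` for every flat `Y`. -/
def ModularFlat (𝔽 : Type*) [Field 𝔽] (n k : ℕ) (Sk X : Finset (Finset (Fin n))) : Prop :=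
  SimFlat 𝔽 n k Sk X ∧ ∀ Y, SimFlat 𝔽 n k Sk Y →
    simRank 𝔽 n k X + simRank 𝔽 n k Y = simRank 𝔽 n k (X ∪ Y) + simRank 𝔽 n k (X ∩ Y)

open scoped Classical in
/-- The closure of `X` in `Sim_k^n(S_k)`. -/
noncomputable def simClosure (𝔽 : Type*) [Field 𝔽] (n k : ℕ)
    (Sk X : Finset (Finset (Fin n))) : Finset (Finset (Fin n)) :=
  Sk.filter fun F =>
    bvec 𝔽 n k F ∈ Submodule.span 𝔽 ((fun G => bvec 𝔽 n k G) '' (X : Set (Finset (Fin n))))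

/-- `Sim_k^n(S_k)` is supersolvable: it admits a maximal chain of modular flats
`cl(∅) = X_0 ⊊ X_1 ⊊ ⋯ ⊊ X_r = S_k`, `r` the rank. -/
def Supersolvable (𝔽 : Type*) [Field 𝔽] (n k : ℕ) (Sk : Finset (Finset (Fin n))) : Prop :=
  ∃ X : ℕ → Finset (Finset (Fin n)),
    X 0 = simClosure 𝔽 n k Sk ∅ ∧ X (simRank 𝔽 n k Sk) = Sk ∧
      (∀ i < simRank 𝔽 n k Sk, X i ⊂ X (i + 1)) ∧
      ∀ i ≤ simRank 𝔽 n k Sk, ModularFlat 𝔽 n k Sk (X i)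

/-- `H` is a dense hyperplane of `Sim_k^n(ground)`: a hyperplane of the form
`ground ∖ supp(δ^{k-1} V)` for some `(k-1)`-subset `V` simplicial in `⟨ground⟩`. -/
def DenseHyp (𝔽 : Type*) [Field 𝔽] (n k : ℕ) (ground H : Finset (Finset (Fin n))) : Prop :=
  SimHyperplane 𝔽 n k ground H ∧
    ∃ V : Finset (Fin n), V.card = k - 1 ∧ SimplicialFace k ground V ∧
      H = ground \ suppδ 𝔽 ground V

/-- `Sim_k^n(S_k)` is superdense: there is a chain `∅ = X_0 ⊊ X_1 ⊊ ⋯ ⊊ X_r = S_k` of flats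
(`r` the rank) with each `X_i` a dense hyperplane of `Sim_k^n(X_{i+1})`. -/
def Superdense (𝔽 : Type*) [Field 𝔽] (n k : ℕ) (Sk : Finset (Finset (Fin n))) : Prop :=
  ∃ X : ℕ → Finset (Finset (Fin n)),
    X 0 = ∅ ∧ X (simRank 𝔽 n k Sk) = Sk ∧
      (∀ i ≤ simRank 𝔽 n k Sk, SimFlat 𝔽 n k Sk (X i)) ∧
      (∀ i < simRank 𝔽 n k Sk, X i ⊂ X (i + 1)) ∧
      ∀ i < simRank 𝔽 n k Sk, DenseHyp 𝔽 n k (X (i + 1)) (X i)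

/-- `Sim_k^n(S_k)` is triangulable over `𝔽`: the boundaries of the `(k+1)`-faces of `⟨S_k⟩`
span the circuit space `ker ∂_k`. -/
def Triangulable (𝔽 : Type*) [Field 𝔽] (n k : ℕ) (Sk : Finset (Finset (Fin n))) : Prop :=
  Submodule.span 𝔽
      {v : ↥Sk → 𝔽 | ∃ X : Finset (Fin n), X.card = k + 1 ∧ IsFace k Sk X ∧ v = pbdry 𝔽 Sk X}
    = LinearMap.ker (bdryMap 𝔽 n k Sk)

/-- `Sim_k^n(S_k)` is strongly triangulable over `𝔽`: there are `(k+1)`-faces `X_1,…,X_{m'}`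
of `⟨S_k⟩` whose boundaries span `ker ∂_k` and such that every circuit `C` has a
representing vector `C⃗` with support `C` which is a combination, with nonzero coefficients,
of boundaries `∂_{k+1} X_{i_j}` with `⋃_{F ∈ C} F = ⋃_j X_{i_j}`. -/
def StronglyTriangulable (𝔽 : Type*) [Field 𝔽] (n k : ℕ)
    (Sk : Finset (Finset (Fin n))) : Prop :=
  ∃ (m' : ℕ) (Xs : Fin m' → Finset (Fin n)),
    (∀ i, (Xs i).card = k + 1 ∧ IsFace k Sk (Xs i)) ∧
    Submodule.span 𝔽 (Set.range fun i => pbdry 𝔽 Sk (Xs i)) = LinearMap.ker (bdryMap 𝔽 n k Sk) ∧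
    ∀ C, SimCircuit 𝔽 n k Sk C →
      ∃ (s : ℕ) (idx : Fin s → Fin m') (a : Fin s → 𝔽) (Cv : ↥Sk → 𝔽),
        (∀ j, a j ≠ 0) ∧ suppFin Cv = C ∧
        Cv = ∑ j, a j • pbdry 𝔽 Sk (Xs (idx j)) ∧
        C.biUnion id = Finset.univ.biUnion fun j : Fin s => Xs (idx j)

/-- The simple graph `([n], S_2)`. -/
def graphOf {n : ℕ} (S2 : Finset (Finset (Fin n))) : SimpleGraph (Fin n) where
  Adj u v := u ≠ v ∧ ({u, v} : Finset (Fin n)) ∈ S2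
  symm := by
    constructor
    intro u v h
    exact ⟨h.1.symm, by rw [Finset.pair_comm]; exact h.2⟩
  loopless := by constructor; intro u h; exact h.1 rfl

/-- A simple graph is chordal if every cycle of length at least four has a chord, i.e. an
edge of the graph joining two non-consecutive vertices of the cycle. -/
def Chordal {α : Type*} (G : SimpleGraph α) : Prop :=
  ∀ (v : α) (w : G.Walk v v), w.IsCycle → 4 ≤ w.length →
    ∃ u₁ u₂, u₁ ∈ w.support ∧ u₂ ∈ w.support ∧ G.Adj u₁ u₂ ∧ s(u₁, u₂) ∉ w.edges


/-! ### Auxiliary lemmas -/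

section Aux

open Finset

variable {𝔽 : Type*} [Field 𝔽] {n k : ℕ}

lemma erase_eq_erase_iff {F : Finset (Fin n)} {i j : Fin n} (hi : i ∈ F) (hj : j ∈ F) :
    F.erase i = F.erase j ↔ i = j := by
  constructor
  · intro h
    by_contra hne
    have h1 : i ∈ F.erase j := Finset.mem_erase.2 ⟨hne, hi⟩
    rw [← h] at h1
    exact (Finset.notMem_erase i F) h1
  · rintro rfl; rfl

lemma inc_of_erase {F : Finset (Fin n)} {i : Fin n} (hi : i ∈ F) :
    inc (F.erase i) F = (-1 : ℤ) ^ (F.filter (fun j => j ≤ i)).card := by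
  unfold inc
  rw [Finset.sum_eq_single_of_mem i hi]
  · simp
  · intro j hj hne
    rw [if_neg]
    intro h
    exact hne (((erase_eq_erase_iff hj hi).1 h.symm))

lemma inc_eq_zero {F' F : Finset (Fin n)} (h : ∀ i ∈ F, F' ≠ F.erase i) : inc F' F = 0 := by
  unfold inc
  apply Finset.sum_eq_zero
  intro i hi
  rw [if_neg (h i hi)]

lemma exists_erase_of_inc_ne_zero {F' F : Finset (Fin n)} (h : inc F' F ≠ 0) :
    ∃ i ∈ F, F' = F.erase i := by
  by_contra hc
  push_neg at hc
  exact h (inc_eq_zero hc)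

lemma inc_ne_zero_of_erase {F : Finset (Fin n)} {i : Fin n} (hi : i ∈ F) :
    inc (F.erase i) F ≠ 0 := by
  rw [inc_of_erase hi]
  exact pow_ne_zero _ (by norm_num)

lemma exists_erase_of_subset {V F : Finset (Fin n)} (hVF : V ⊆ F) (hc : V.card + 1 = F.card) :
    ∃ i ∈ F, V = F.erase i := by
  have hcd : (F \ V).card = 1 := by rw [Finset.card_sdiff_of_subset hVF]; omega
  obtain ⟨i, hi⟩ := Finset.card_eq_one.1 hcd
  have him : i ∈ F \ V := hi ▸ Finset.mem_singleton_self i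
  obtain ⟨hiF, hiV⟩ := Finset.mem_sdiff.1 him
  refine ⟨i, hiF, ?_⟩
  apply Finset.Subset.antisymm
  · intro a ha
    exact Finset.mem_erase.2 ⟨fun h => hiV (h ▸ ha), hVF ha⟩
  · intro a ha
    obtain ⟨hne, haF⟩ := Finset.mem_erase.1 ha
    by_contra haV
    have : a ∈ F \ V := Finset.mem_sdiff.2 ⟨haF, haV⟩
    rw [hi] at this
    exact hne (Finset.mem_singleton.1 this)

lemma subset_of_inc_ne_zero {F' F : Finset (Fin n)} (h : inc F' F ≠ 0) : F' ⊆ F := by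
  obtain ⟨i, hi, rfl⟩ := exists_erase_of_inc_ne_zero h
  exact Finset.erase_subset _ _

lemma inc_ne_zero_iff {V F : Finset (Fin n)} (hc : V.card + 1 = F.card) :
    inc V F ≠ 0 ↔ V ⊆ F := by
  constructor
  · exact subset_of_inc_ne_zero
  · intro hVF
    obtain ⟨i, hi, rfl⟩ := exists_erase_of_subset hVF hc
    exact inc_ne_zero_of_erase hi

lemma erase_erase_eq_sdiff (X : Finset (Fin n)) (a b : Fin n) :
    (X.erase a).erase b = X \ {a, b} := by
  ext x
  simp only [Finset.mem_erase, Finset.mem_sdiff, Finset.mem_insert, Finset.mem_singleton]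
  tauto

lemma inc_pair_add {X : Finset (Fin n)} {a b : Fin n} (ha : a ∈ X) (hb : b ∈ X) (hab : a ≠ b) :
    inc ((X.erase a).erase b) (X.erase a) * inc (X.erase a) X
      + inc ((X.erase b).erase a) (X.erase b) * inc (X.erase b) X = 0 := by
  have hbea : b ∈ X.erase a := Finset.mem_erase.2 ⟨hab.symm, hb⟩
  have haeb : a ∈ X.erase b := Finset.mem_erase.2 ⟨hab, ha⟩
  rw [inc_of_erase ha, inc_of_erase hb, inc_of_erase hbea, inc_of_erase haeb]
  have hq1 : ((X.erase a).filter (fun j => j ≤ b)).card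
      = ((X.filter (fun j => j ≤ b)).erase a).card := by
    rw [Finset.filter_erase]
  have hq2 : ((X.erase b).filter (fun j => j ≤ a)).card
      = ((X.filter (fun j => j ≤ a)).erase b).card := by
    rw [Finset.filter_erase]
  rcases le_or_gt a b with hle | hlt
  · -- a ≤ b, a ≠ b so ¬ (b ≤ a)
    have hnba : ¬ b ≤ a := fun h => hab (le_antisymm hle h)
    have hma : a ∈ X.filter (fun j => j ≤ b) := Finset.mem_filter.2 ⟨ha, hle⟩
    have hmb : b ∉ X.filter (fun j => j ≤ a) := by
      intro h
      exact hnba (Finset.mem_filter.1 h).2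
    have h1 : ((X.filter (fun j => j ≤ b)).erase a).card + 1
        = (X.filter (fun j => j ≤ b)).card := by
      rw [Finset.card_erase_of_mem hma]
      have : 0 < (X.filter (fun j => j ≤ b)).card := Finset.card_pos.2 ⟨a, hma⟩
      omega
    have h2 : ((X.filter (fun j => j ≤ a)).erase b).card
        = (X.filter (fun j => j ≤ a)).card := by
      rw [Finset.erase_eq_of_notMem hmb]
    rw [hq1, hq2, h2, ← h1]
    ring
  · have hnab : ¬ a ≤ b := not_le.2 hlt
    have hmb : b ∈ X.filter (fun j => j ≤ a) := Finset.mem_filter.2 ⟨hb, le_of_lt hlt⟩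
    have hma : a ∉ X.filter (fun j => j ≤ b) := by
      intro h
      exact hnab (Finset.mem_filter.1 h).2
    have h1 : ((X.filter (fun j => j ≤ a)).erase b).card + 1
        = (X.filter (fun j => j ≤ a)).card := by
      rw [Finset.card_erase_of_mem hmb]
      have : 0 < (X.filter (fun j => j ≤ a)).card := Finset.card_pos.2 ⟨b, hmb⟩
      omega
    have h2 : ((X.filter (fun j => j ≤ b)).erase a).card
        = (X.filter (fun j => j ≤ b)).card := by
      rw [Finset.erase_eq_of_notMem hma]
    rw [hq1, hq2, h2, ← h1]
    ring

lemma sum_inc_inc (X F'' : Finset (Fin n)) :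
    ∑ i ∈ X, inc F'' (X.erase i) * inc (X.erase i) X = 0 := by
  by_cases hex : ∃ a ∈ X, ∃ b ∈ X, a ≠ b ∧ F'' = (X.erase a).erase b
  · obtain ⟨a, ha, b, hb, hab, hF⟩ := hex
    have hsub : ({a, b} : Finset (Fin n)) ⊆ X :=
      Finset.insert_subset ha (Finset.singleton_subset_iff.2 hb)
    have hzero : ∀ i ∈ X, i ∉ ({a, b} : Finset (Fin n)) →
        inc F'' (X.erase i) * inc (X.erase i) X = 0 := by
      intro i hiX hinot
      rcases eq_or_ne (inc F'' (X.erase i)) 0 with h | h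
      · rw [h, zero_mul]
      · obtain ⟨j, hj, hFj⟩ := exists_erase_of_inc_ne_zero h
        exfalso
        have hiF : i ∉ F'' := by
          rw [hFj]
          intro hmem
          exact Finset.notMem_erase i X (Finset.mem_erase.1 hmem).2
        have hiab : i ∈ ({a, b} : Finset (Fin n)) := by
          have hns : i ∉ X \ ({a, b} : Finset (Fin n)) := by
            rw [← erase_erase_eq_sdiff, ← hF]
            exact hiF
          by_contra hnot
          exact hns (Finset.mem_sdiff.2 ⟨hiX, hnot⟩)
        exact hinot hiab
    rw [← Finset.sum_subset hsub (fun i hiX hinot => hzero i hiX hinot)]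
    rw [Finset.sum_pair hab, hF]
    have key := inc_pair_add ha hb hab
    rw [Finset.erase_right_comm (s := X) (a := b) (b := a)] at key
    exact key
  · push_neg at hex
    apply Finset.sum_eq_zero
    intro i hi
    rcases eq_or_ne (inc F'' (X.erase i)) 0 with h | h
    · rw [h, zero_mul]
    · obtain ⟨j, hj, hFj⟩ := exists_erase_of_inc_ne_zero h
      obtain ⟨hji, hjX⟩ := Finset.mem_erase.1 hj
      exact absurd hFj (hex i hi j hjX (fun h' => hji h'.symm))

end Aux


section Vec

open Finset
open scoped Classical

variable {𝔽 : Type*} [Field 𝔽] {n k : ℕ}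

/-- Extension of `v : 𝔽^{Sk}` to a function on all of `Finset (Fin n)`, by zero. -/
noncomputable def ex0 {Sk : Finset (Finset (Fin n))} (v : ↥Sk → 𝔽) :
    Finset (Fin n) → 𝔽 :=
  fun G => if h : G ∈ Sk then v ⟨G, h⟩ else 0

lemma ex0_coe {Sk : Finset (Finset (Fin n))} (v : ↥Sk → 𝔽) (F : ↥Sk) :
    ex0 v F.1 = v F := by
  simp [ex0]

lemma suppFin_eq_filter {Sk : Finset (Finset (Fin n))} (v : ↥Sk → 𝔽) :
    suppFin v = Sk.filter (fun G => ex0 v G ≠ 0) := by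
  classical
  ext F
  simp only [suppFin, Finset.mem_image, Finset.mem_filter, Finset.mem_attach, true_and]
  constructor
  · rintro ⟨a, ha, rfl⟩
    exact ⟨a.2, by rw [ex0_coe]; exact ha⟩
  · rintro ⟨hF, hne⟩
    exact ⟨⟨F, hF⟩, by rw [← ex0_coe v ⟨F, hF⟩]; exact hne, rfl⟩

lemma suppFin_subset {Sk : Finset (Finset (Fin n))} (v : ↥Sk → 𝔽) :
    suppFin v ⊆ Sk := by
  rw [suppFin_eq_filter]; exact Finset.filter_subset _ _

lemma ex0_eq_zero_of_not_mem_suppFin {Sk : Finset (Finset (Fin n))} {v : ↥Sk → 𝔽}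
    {G : Finset (Fin n)} (h : G ∉ suppFin v) : ex0 v G = 0 := by
  rw [suppFin_eq_filter] at h
  by_cases hG : G ∈ Sk
  · by_contra hne
    exact h (Finset.mem_filter.2 ⟨hG, hne⟩)
  · simp [ex0, hG]

lemma sum_coe_eq_sum_ex0 {M : Type*} [AddCommMonoid M] [Module 𝔽 M]
    {Sk : Finset (Finset (Fin n))} (v : ↥Sk → 𝔽) (f : Finset (Fin n) → M) :
    ∑ F : ↥Sk, v F • f F.1 = ∑ G ∈ Sk, ex0 v G • f G := by
  rw [show (∑ F : ↥Sk, v F • f F.1) = ∑ F : ↥Sk, (fun G => ex0 v G • f G) F.1 from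
    Finset.sum_congr rfl (fun F _ => by simp only []; rw [ex0_coe])]
  exact Finset.sum_coe_sort Sk (fun G => ex0 v G • f G)

lemma bdryMap_eq_sum {Sk : Finset (Finset (Fin n))} (v : ↥Sk → 𝔽) :
    bdryMap 𝔽 n k Sk v = ∑ F : ↥Sk, v F • bvec 𝔽 n k F.1 := by
  funext F'
  simp only [bdryMap, Matrix.mulVecLin_apply, Matrix.mulVec, dotProduct, Matrix.of_apply]
  rw [Finset.sum_apply]
  exact Finset.sum_congr rfl fun F _ => by
    simp [bvec, mul_comm]

lemma bdryMap_eq_sum' {Sk : Finset (Finset (Fin n))} (v : ↥Sk → 𝔽) :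
    bdryMap 𝔽 n k Sk v = ∑ G ∈ Sk, ex0 v G • bvec 𝔽 n k G := by
  rw [bdryMap_eq_sum]
  exact sum_coe_eq_sum_ex0 v (bvec 𝔽 n k)

lemma bdryMap_eq_sum_supp {Sk : Finset (Finset (Fin n))} (v : ↥Sk → 𝔽) :
    bdryMap 𝔽 n k Sk v = ∑ G ∈ suppFin v, ex0 v G • bvec 𝔽 n k G := by
  rw [bdryMap_eq_sum']
  symm
  apply Finset.sum_subset (suppFin_subset v)
  intro G _ hG
  rw [ex0_eq_zero_of_not_mem_suppFin hG, zero_smul]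

/-- The extension-by-zero linear map `𝔽^{Sk'} → 𝔽^{Sk}` for `Sk' ⊆ Sk`. -/
noncomputable def extV {Sk' Sk : Finset (Finset (Fin n))} (hsub : Sk' ⊆ Sk) :
    (↥Sk' → 𝔽) →ₗ[𝔽] (↥Sk → 𝔽) where
  toFun v F := ex0 v F.1
  map_add' u v := by
    funext F
    by_cases h : F.1 ∈ Sk' <;> simp [ex0, h]
  map_smul' c v := by
    funext F
    by_cases h : F.1 ∈ Sk' <;> simp [ex0, h]

lemma extV_apply {Sk' Sk : Finset (Finset (Fin n))} (hsub : Sk' ⊆ Sk) (v : ↥Sk' → 𝔽)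
    (F : ↥Sk) : extV hsub v F = ex0 v F.1 := rfl

lemma ex0_extV {Sk' Sk : Finset (Finset (Fin n))} (hsub : Sk' ⊆ Sk) (v : ↥Sk' → 𝔽)
    (G : Finset (Fin n)) : ex0 (extV hsub v) G = ex0 v G := by
  by_cases h : G ∈ Sk
  · show (if h' : G ∈ Sk then extV hsub v ⟨G, h'⟩ else 0) = ex0 v G
    rw [dif_pos h]
    rfl
  · have h' : G ∉ Sk' := fun hc => h (hsub hc)
    simp [ex0, h, h']

lemma suppFin_extV {Sk' Sk : Finset (Finset (Fin n))} (hsub : Sk' ⊆ Sk) (v : ↥Sk' → 𝔽) :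
    suppFin (extV hsub v) = suppFin v := by
  rw [suppFin_eq_filter, suppFin_eq_filter]
  ext G
  simp only [Finset.mem_filter, ex0_extV]
  constructor
  · rintro ⟨hG, hne⟩
    refine ⟨?_, hne⟩
    by_contra h'
    exact hne (by simp [ex0, h'])
  · rintro ⟨hG, hne⟩
    exact ⟨hsub hG, hne⟩

lemma bdryMap_extV {Sk' Sk : Finset (Finset (Fin n))} (hsub : Sk' ⊆ Sk) (v : ↥Sk' → 𝔽) :
    bdryMap 𝔽 n k Sk (extV hsub v) = bdryMap 𝔽 n k Sk' v := by
  rw [bdryMap_eq_sum_supp, bdryMap_eq_sum_supp, suppFin_extV]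
  exact Finset.sum_congr rfl fun G _ => by rw [ex0_extV]

lemma pbdry_eq_extV {Sk' Sk : Finset (Finset (Fin n))} (hsub : Sk' ⊆ Sk)
    (X : Finset (Fin n)) (hX : ∀ i ∈ X, X.erase i ∈ Sk') :
    pbdry 𝔽 Sk X = extV hsub (pbdry 𝔽 Sk' X) := by
  funext F
  rw [extV_apply]
  by_cases h : F.1 ∈ Sk'
  · rw [show ex0 (pbdry 𝔽 Sk' X) F.1 = pbdry 𝔽 Sk' X ⟨F.1, h⟩ from dif_pos h]
    rfl
  · rw [show ex0 (pbdry 𝔽 Sk' X) F.1 = (0 : 𝔽) from dif_neg h]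
    show ((inc F.1 X : ℤ) : 𝔽) = 0
    rcases eq_or_ne (inc F.1 X) 0 with h0 | h0
    · rw [h0]; norm_num
    · obtain ⟨i, hi, hFi⟩ := exists_erase_of_inc_ne_zero h0
      exact absurd (hFi ▸ hX i hi) h

lemma mem_ker_bdryMap_iff {Sk : Finset (Finset (Fin n))} (v : ↥Sk → 𝔽) :
    v ∈ LinearMap.ker (bdryMap 𝔽 n k Sk) ↔ ∑ F : ↥Sk, v F • bvec 𝔽 n k F.1 = 0 := by
  rw [LinearMap.mem_ker, bdryMap_eq_sum]

/-- A nonzero kernel vector makes its support dependent. -/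
lemma not_linearIndependent_suppFin {Sk : Finset (Finset (Fin n))} {v : ↥Sk → 𝔽}
    (hker : bdryMap 𝔽 n k Sk v = 0) (hne : v ≠ 0) :
    ¬ LinearIndependent 𝔽 (fun F : ↥(suppFin v) => bvec 𝔽 n k F.1) := by
  rw [Fintype.not_linearIndependent_iff]
  refine ⟨fun F => ex0 v F.1, ?_, ?_⟩
  · rw [show ∑ F : ↥(suppFin v), ex0 v F.1 • bvec 𝔽 n k F.1
        = ∑ G ∈ suppFin v, ex0 v G • bvec 𝔽 n k G from
      Finset.sum_coe_sort _ (fun G => ex0 v G • bvec 𝔽 n k G)]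
    rw [← bdryMap_eq_sum_supp, hker]
  · have : ∃ F : ↥Sk, v F ≠ 0 := by
      by_contra hc
      push_neg at hc
      exact hne (funext fun F => hc F)
    obtain ⟨F, hF⟩ := this
    have hmem : F.1 ∈ suppFin v := by
      rw [suppFin_eq_filter]
      exact Finset.mem_filter.2 ⟨F.2, by show ex0 v F.1 ≠ 0; rw [ex0_coe v F]; exact hF⟩
    exact ⟨⟨F.1, hmem⟩, by show ex0 v F.1 ≠ 0; rw [ex0_coe v F]; exact hF⟩

/-- A dependent set yields a nonzero kernel vector supported inside it. -/
lemma exists_ker_of_not_linearIndependent {Sk C : Finset (Finset (Fin n))} (hCS : C ⊆ Sk)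
    (hdep : ¬ LinearIndependent 𝔽 (fun F : ↥C => bvec 𝔽 n k F.1)) :
    ∃ v : ↥Sk → 𝔽, bdryMap 𝔽 n k Sk v = 0 ∧ v ≠ 0 ∧ suppFin v ⊆ C := by
  rw [Fintype.not_linearIndependent_iff] at hdep
  obtain ⟨g, hsum, i0, hi0⟩ := hdep
  refine ⟨extV hCS g, ?_, ?_, ?_⟩
  · rw [bdryMap_extV, bdryMap_eq_sum, hsum]
  · intro hz
    have : extV hCS g ⟨i0.1, hCS i0.2⟩ = 0 := by rw [hz]; rfl
    rw [extV_apply, ex0_coe] at this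
    exact hi0 this
  · rw [suppFin_extV]
    exact suppFin_subset g

/-- Every circuit has a circuit vector: a kernel vector with support exactly the circuit. -/
lemma exists_circuit_vector {Sk C : Finset (Finset (Fin n))}
    (hC : SimCircuit 𝔽 n k Sk C) :
    ∃ v : ↥Sk → 𝔽, bdryMap 𝔽 n k Sk v = 0 ∧ v ≠ 0 ∧ suppFin v = C := by
  obtain ⟨hCS, hdep, hmin⟩ := hC
  obtain ⟨v, hker, hne, hsub⟩ := exists_ker_of_not_linearIndependent hCS hdep
  refine ⟨v, hker, hne, ?_⟩
  by_contra hne'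
  have hssub : suppFin v ⊂ C := Finset.ssubset_iff_subset_ne.2 ⟨hsub, hne'⟩
  exact not_linearIndependent_suppFin hker hne (hmin _ hssub)

end Vec


section Rank

open Finset
open scoped Classical

variable {𝔽 : Type*} [Field 𝔽] {n k : ℕ}

lemma simRank_mono {X Y : Finset (Finset (Fin n))} (h : X ⊆ Y) :
    simRank 𝔽 n k X ≤ simRank 𝔽 n k Y :=
  Submodule.finrank_mono (Submodule.span_mono (Set.image_mono (Finset.coe_subset.2 h)))

lemma simRank_insert_le (X : Finset (Finset (Fin n))) (e : Finset (Fin n)) :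
    simRank 𝔽 n k (insert e X) ≤ simRank 𝔽 n k X + 1 := by
  unfold simRank
  rw [Finset.coe_insert, Set.image_insert_eq, Submodule.span_insert]
  refine le_trans (Submodule.finrank_add_le_finrank_add_finrank _ _) ?_
  have h1 : Module.finrank 𝔽
      (Submodule.span 𝔽 ({bvec 𝔽 n k e} : Set (Csets n (k-1) → 𝔽))) ≤ 1 := by
    by_cases h : bvec 𝔽 n k e = 0
    · rw [h]
      rw [Submodule.span_zero_singleton]
      simp
    · rw [finrank_span_singleton h]
  omega

lemma int_cast_inc_ne_zero_iff {V F : Finset (Fin n)} (hc : V.card + 1 = F.card) :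
    ((inc V F : ℤ) : 𝔽) ≠ 0 ↔ V ⊆ F := by
  constructor
  · intro h
    have : inc V F ≠ 0 := by
      intro h0
      rw [h0] at h
      exact h (by norm_num)
    exact subset_of_inc_ne_zero this
  · intro hVF
    obtain ⟨i, hi, rfl⟩ := exists_erase_of_subset hVF hc
    rw [inc_of_erase hi]
    push_cast
    exact pow_ne_zero _ (neg_ne_zero.2 one_ne_zero)

lemma mem_suppδ {G : Finset (Finset (Fin n))} {V F : Finset (Fin n)} :
    F ∈ suppδ 𝔽 G V ↔ F ∈ G ∧ ((inc V F : ℤ) : 𝔽) ≠ 0 := by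
  unfold suppδ
  rw [suppFin_eq_filter, Finset.mem_filter]
  constructor
  · rintro ⟨hF, hne⟩
    refine ⟨hF, ?_⟩
    rwa [show ex0 (cobdry 𝔽 G V) F = ((inc V F : ℤ) : 𝔽) from by
      rw [show ex0 (cobdry 𝔽 G V) F = cobdry 𝔽 G V ⟨F, hF⟩ from dif_pos hF]; rfl] at hne
  · rintro ⟨hF, hne⟩
    refine ⟨hF, ?_⟩
    rwa [show ex0 (cobdry 𝔽 G V) F = ((inc V F : ℤ) : 𝔽) from by
      rw [show ex0 (cobdry 𝔽 G V) F = cobdry 𝔽 G V ⟨F, hF⟩ from dif_pos hF]; rfl]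

lemma suppδ_subset (G : Finset (Finset (Fin n))) (V : Finset (Fin n)) :
    suppδ 𝔽 G V ⊆ G := fun _ h => (mem_suppδ.1 h).1

lemma suppδ_eq_filter {Sk : Finset (Finset (Fin n))} (hSk : ∀ F ∈ Sk, F.card = k)
    {V : Finset (Fin n)} (hV : V.card = k - 1) (hk : 1 ≤ k) :
    suppδ 𝔽 Sk V = Sk.filter (fun F => V ⊆ F) := by
  ext F
  rw [mem_suppδ, Finset.mem_filter]
  constructor
  · rintro ⟨hF, hne⟩
    exact ⟨hF, (int_cast_inc_ne_zero_iff (by rw [hV, hSk F hF]; omega)).1 hne⟩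
  · rintro ⟨hF, hsub⟩
    exact ⟨hF, (int_cast_inc_ne_zero_iff (by rw [hV, hSk F hF]; omega)).2 hsub⟩

lemma suppδ_sdiff (G B : Finset (Finset (Fin n))) (V : Finset (Fin n)) :
    suppδ 𝔽 (G \ B) V = suppδ 𝔽 G V \ B := by
  ext F
  rw [mem_suppδ, Finset.mem_sdiff, Finset.mem_sdiff, mem_suppδ]
  tauto

lemma bdryMap_pbdry (Sk : Finset (Finset (Fin n))) {X : Finset (Fin n)}
    (hXc : X.card = k + 1) (hX : ∀ G ⊆ X, G.card = k → G ∈ Sk) :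
    bdryMap 𝔽 n k Sk (pbdry 𝔽 Sk X) = 0 := by
  rw [bdryMap_eq_sum']
  funext F'
  rw [Finset.sum_apply, Pi.zero_apply]
  have hterm : ∀ G ∈ Sk, (ex0 (pbdry 𝔽 Sk X) G • bvec 𝔽 n k G) F'
      = ((inc F'.1 G * inc G X : ℤ) : 𝔽) := by
    intro G hG
    rw [Pi.smul_apply, show ex0 (pbdry 𝔽 Sk X) G = pbdry 𝔽 Sk X ⟨G, hG⟩ from dif_pos hG]
    show ((inc G X : ℤ) : 𝔽) • ((inc F'.1 G : ℤ) : 𝔽) = _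
    push_cast
    rw [smul_eq_mul, mul_comm]
  rw [Finset.sum_congr rfl hterm]
  rw [← Int.cast_sum]
  have hz : ∑ G ∈ Sk, inc F'.1 G * inc G X = 0 := by
    have himg : X.image (fun i => X.erase i) ⊆ Sk := by
      intro G hG
      obtain ⟨i, hi, rfl⟩ := Finset.mem_image.1 hG
      exact hX _ (Finset.erase_subset _ _) (by rw [Finset.card_erase_of_mem hi, hXc]; omega)
    rw [← Finset.sum_subset himg]
    · rw [Finset.sum_image (fun a ha b hb h => (erase_eq_erase_iff ha hb).1 h)]
      exact sum_inc_inc X F'.1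
    · intro G _ hnot
      rcases eq_or_ne (inc G X) 0 with h | h
      · rw [h, mul_zero]
      · obtain ⟨i, hi, rfl⟩ := exists_erase_of_inc_ne_zero h
        exact absurd (Finset.mem_image.2 ⟨i, hi, rfl⟩) hnot
  rw [hz, Int.cast_zero]

lemma isFace_of_mem {Sk : Finset (Finset (Fin n))} (hSk : ∀ F ∈ Sk, F.card = k)
    {F : Finset (Fin n)} (hF : F ∈ Sk) : IsFace k Sk F := by
  right
  intro G hG hGc
  have : G = F := Finset.eq_of_subset_of_card_le hG (by rw [hSk F hF, hGc])
  rwa [this]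

lemma exists_facet_sup {Sk : Finset (Finset (Fin n))} {F : Finset (Fin n)}
    (hF : IsFace k Sk F) : ∃ X, IsFacet k Sk X ∧ F ⊆ X := by
  have hne : (Finset.univ.filter
      (fun G : Finset (Fin n) => IsFace k Sk G ∧ F ⊆ G)).Nonempty :=
    ⟨F, Finset.mem_filter.2 ⟨Finset.mem_univ _, hF, Finset.Subset.refl F⟩⟩
  obtain ⟨X, hX, hmax⟩ : ∃ X ∈ (Finset.univ.filter
      (fun G : Finset (Fin n) => IsFace k Sk G ∧ F ⊆ G)), ∀ x ∈ (Finset.univ.filter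
      (fun G : Finset (Fin n) => IsFace k Sk G ∧ F ⊆ G)), ¬ X < x := by
    obtain ⟨X, hX⟩ := Finset.exists_maximal hne
    exact ⟨X, hX.prop, fun x hx hlt => lt_irrefl _ (lt_of_lt_of_le hlt (hX.2 hx hlt.le))⟩
  obtain ⟨-, hXface, hFX⟩ := Finset.mem_filter.1 hX
  refine ⟨X, ⟨hXface, ?_⟩, hFX⟩
  intro G hGface hXG
  by_contra hne'
  exact hmax G (Finset.mem_filter.2 ⟨Finset.mem_univ _, hGface, hFX.trans hXG⟩)
    (Finset.lt_iff_ssubset.2 (Finset.ssubset_iff_subset_ne.2 ⟨hXG, hne'⟩))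

end Rank

section Transfer

open Finset
open scoped Classical

variable {𝔽 : Type*} [Field 𝔽] {n k : ℕ}

lemma delSeq_eq_shift (Sk : Finset (Finset (Fin n))) (V : ℕ → Finset (Fin n)) (j : ℕ) :
    delSeq 𝔽 (Sk \ suppδ 𝔽 Sk (V 0)) (fun i => V (i + 1)) j = delSeq 𝔽 Sk V (j + 1) := by
  induction j with
  | zero => rfl
  | succ j ih =>
    show delSeq 𝔽 (Sk \ suppδ 𝔽 Sk (V 0)) (fun i => V (i + 1)) j \ _
        = delSeq 𝔽 Sk V (j + 1) \ _
    rw [ih]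

lemma delSeq_eq_sdiff (Sk : Finset (Finset (Fin n))) (V : ℕ → Finset (Fin n)) (j : ℕ) :
    delSeq 𝔽 Sk V j = Sk \ (Finset.range j).biUnion (fun i => suppδ 𝔽 Sk (V i)) := by
  induction j with
  | zero => simp [delSeq]
  | succ j ih =>
    show delSeq 𝔽 Sk V j \ suppδ 𝔽 (delSeq 𝔽 Sk V j) (V j) = _
    rw [ih, suppδ_sdiff]
    ext F
    rw [Finset.mem_sdiff, Finset.mem_sdiff, Finset.mem_sdiff, Finset.mem_sdiff]
    constructor
    · rintro ⟨⟨hF, h1⟩, h2⟩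
      refine ⟨hF, ?_⟩
      intro hm
      obtain ⟨i, hi, hmem⟩ := Finset.mem_biUnion.1 hm
      rw [Finset.mem_range] at hi
      rcases Nat.lt_succ_iff_lt_or_eq.1 hi with h | rfl
      · exact h1 (Finset.mem_biUnion.2 ⟨i, Finset.mem_range.2 h, hmem⟩)
      · exact h2 ⟨hmem, h1⟩
    · rintro ⟨hF, hall⟩
      have h1 : F ∉ (Finset.range j).biUnion (fun i => suppδ 𝔽 Sk (V i)) := by
        intro hm
        obtain ⟨i, hi, hmem⟩ := Finset.mem_biUnion.1 hm
        rw [Finset.mem_range] at hi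
        exact hall (Finset.mem_biUnion.2 ⟨i, Finset.mem_range.2 (by omega), hmem⟩)
      refine ⟨⟨hF, h1⟩, ?_⟩
      rintro ⟨hmem, -⟩
      exact hall (Finset.mem_biUnion.2 ⟨j, Finset.mem_range.2 (by omega), hmem⟩)

lemma Cstar_shift (Sk : Finset (Finset (Fin n))) (V : ℕ → Finset (Fin n)) (j : ℕ) :
    Cstar 𝔽 (Sk \ suppδ 𝔽 Sk (V 0)) (fun i => V (i + 1)) j = Cstar 𝔽 Sk V (j + 1) := by
  unfold Cstar
  ext F
  rw [Finset.mem_sdiff, Finset.mem_sdiff, suppδ_sdiff, Finset.mem_sdiff]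
  constructor
  · rintro ⟨⟨ha, h0⟩, hnot⟩
    refine ⟨ha, ?_⟩
    intro hm
    obtain ⟨i, hi, hmem⟩ := Finset.mem_biUnion.1 hm
    rw [Finset.mem_range] at hi
    rcases Nat.eq_zero_or_pos i with rfl | hpos
    · exact h0 hmem
    · obtain ⟨i', rfl⟩ : ∃ i', i = i' + 1 := ⟨i - 1, by omega⟩
      refine hnot (Finset.mem_biUnion.2 ⟨i', Finset.mem_range.2 (by omega), ?_⟩)
      rw [suppδ_sdiff, Finset.mem_sdiff]
      exact ⟨hmem, h0⟩
  · rintro ⟨ha, hnot⟩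
    have h0 : F ∉ suppδ 𝔽 Sk (V 0) :=
      fun h => hnot (Finset.mem_biUnion.2 ⟨0, Finset.mem_range.2 (by omega), h⟩)
    refine ⟨⟨ha, h0⟩, ?_⟩
    intro hm
    obtain ⟨i, hi, hmem⟩ := Finset.mem_biUnion.1 hm
    rw [Finset.mem_range] at hi
    rw [suppδ_sdiff, Finset.mem_sdiff] at hmem
    exact hnot (Finset.mem_biUnion.2 ⟨i + 1, Finset.mem_range.2 (by omega), hmem.1⟩)

end Transfer


section Helpers

open Finset
open scoped Classical

variable {𝔽 : Type*} [Field 𝔽] {n k : ℕ}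

lemma ex0_add {Sk : Finset (Finset (Fin n))} (u v : ↥Sk → 𝔽) (G : Finset (Fin n)) :
    ex0 (u + v) G = ex0 u G + ex0 v G := by
  by_cases h : G ∈ Sk <;> simp [ex0, h]

lemma ex0_sub {Sk : Finset (Finset (Fin n))} (u v : ↥Sk → 𝔽) (G : Finset (Fin n)) :
    ex0 (u - v) G = ex0 u G - ex0 v G := by
  by_cases h : G ∈ Sk <;> simp [ex0, h]

lemma ex0_smul {Sk : Finset (Finset (Fin n))} (c : 𝔽) (v : ↥Sk → 𝔽) (G : Finset (Fin n)) :
    ex0 (c • v) G = c * ex0 v G := by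
  by_cases h : G ∈ Sk <;> simp [ex0, h]

lemma ex0_sum {Sk : Finset (Finset (Fin n))} {ι : Type*} (s : Finset ι) (f : ι → ↥Sk → 𝔽)
    (G : Finset (Fin n)) : ex0 (∑ t ∈ s, f t) G = ∑ t ∈ s, ex0 (f t) G := by
  by_cases h : G ∈ Sk
  · simp only [ex0, dif_pos h]
    rw [Finset.sum_apply]
  · simp [ex0, h]

lemma mem_suppFin_iff {Sk : Finset (Finset (Fin n))} {v : ↥Sk → 𝔽} {G : Finset (Fin n)} :
    G ∈ suppFin v ↔ G ∈ Sk ∧ ex0 v G ≠ 0 := by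
  rw [suppFin_eq_filter, Finset.mem_filter]

lemma suppFin_eq_empty_iff {Sk : Finset (Finset (Fin n))} {v : ↥Sk → 𝔽} :
    suppFin v = ∅ ↔ v = 0 := by
  constructor
  · intro h
    funext F
    have : ex0 v F.1 = 0 := ex0_eq_zero_of_not_mem_suppFin (by rw [h]; exact Finset.notMem_empty _)
    rw [ex0_coe] at this
    exact this
  · intro h
    subst h
    rw [Finset.eq_empty_iff_forall_notMem]
    intro G hG
    exact (mem_suppFin_iff.1 hG).2 (by by_cases h : G ∈ Sk <;> simp [ex0, h])

lemma extV_res {Sk' Sk : Finset (Finset (Fin n))} (hsub : Sk' ⊆ Sk) (w : ↥Sk → 𝔽)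
    (hsupp : suppFin w ⊆ Sk') :
    extV hsub (fun F : ↥Sk' => w ⟨F.1, hsub F.2⟩) = w := by
  funext F
  rw [extV_apply]
  by_cases h : F.1 ∈ Sk'
  · rw [show ex0 (fun F : ↥Sk' => w ⟨F.1, hsub F.2⟩) F.1
        = w ⟨F.1, hsub h⟩ from dif_pos h]
  · rw [show ex0 (fun F : ↥Sk' => w ⟨F.1, hsub F.2⟩) F.1 = (0:𝔽) from dif_neg h]
    have : F.1 ∉ suppFin w := fun hc => h (hsupp hc)
    have h2 := ex0_eq_zero_of_not_mem_suppFin this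
    rw [ex0_coe] at h2
    exact h2.symm

lemma suppFin_res {Sk' Sk : Finset (Finset (Fin n))} (hsub : Sk' ⊆ Sk) (w : ↥Sk → 𝔽)
    (hsupp : suppFin w ⊆ Sk') :
    suppFin (fun F : ↥Sk' => w ⟨F.1, hsub F.2⟩) = suppFin w := by
  rw [← suppFin_extV hsub, extV_res hsub w hsupp]

lemma isFace_mono {Sk' Sk : Finset (Finset (Fin n))} (hsub : Sk' ⊆ Sk) {F : Finset (Fin n)}
    (h : IsFace k Sk' F) : IsFace k Sk F := by
  rcases h with h | h
  · exact Or.inl h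
  · exact Or.inr fun G hG hGc => hsub (h G hG hGc)

lemma face_ksubsets {Sk : Finset (Finset (Fin n))} {F : Finset (Fin n)}
    (hface : IsFace k Sk F) (hc : k ≤ F.card) : ∀ G ⊆ F, G.card = k → G ∈ Sk := by
  rcases hface with h | h
  · omega
  · exact h

/-- Decomposition of kernel vectors into representable circuit vectors. -/
lemma decomp_rep {G : Finset (Finset (Fin n))} {m'' : ℕ} {Xs : Fin m'' → Finset (Fin n)}
    (hcirc : ∀ C, SimCircuit 𝔽 n k G C →
      ∃ (s : ℕ) (idx : Fin s → Fin m'') (a : Fin s → 𝔽) (Cv : ↥G → 𝔽),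
        (∀ j, a j ≠ 0) ∧ suppFin Cv = C ∧
        Cv = ∑ j, a j • pbdry 𝔽 G (Xs (idx j)) ∧
        C.biUnion id = Finset.univ.biUnion fun j => Xs (idx j))
    (hXker : ∀ i, bdryMap 𝔽 n k G (pbdry 𝔽 G (Xs i)) = 0) :
    ∀ (N : ℕ) (u : ↥G → 𝔽), (suppFin u).card ≤ N → bdryMap 𝔽 n k G u = 0 →
      ∃ (s : ℕ) (idx : Fin s → Fin m'') (a : Fin s → 𝔽),
        (∀ j, a j ≠ 0) ∧ u = ∑ j, a j • pbdry 𝔽 G (Xs (idx j)) ∧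
        (Finset.univ.biUnion fun j => Xs (idx j)) = (suppFin u).biUnion id := by
  intro N
  induction N with
  | zero =>
    intro u hcard _
    have hsupp : suppFin u = ∅ := Finset.card_eq_zero.1 (Nat.le_zero.1 hcard)
    refine ⟨0, Fin.elim0, Fin.elim0, fun j => j.elim0, ?_, ?_⟩
    · rw [suppFin_eq_empty_iff.1 hsupp]
      simp
    · rw [hsupp]
      simp
  | succ N ihN =>
    intro u hcard hker
    by_cases hz : u = 0
    · refine ⟨0, Fin.elim0, Fin.elim0, fun j => j.elim0, ?_, ?_⟩
      · rw [hz]; simp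
      · rw [hz, show suppFin (0 : ↥G → 𝔽) = ∅ from suppFin_eq_empty_iff.2 rfl]
        simp
    · -- find a circuit inside the support
      have hdep := not_linearIndependent_suppFin hker hz
      have hTne : ((suppFin u).powerset.filter
          (fun D => ¬ LinearIndependent 𝔽 (fun F : {x // x ∈ D} => bvec 𝔽 n k F.1))).Nonempty :=
        ⟨suppFin u, Finset.mem_filter.2 ⟨Finset.mem_powerset.2 (Finset.Subset.refl _), hdep⟩⟩
      obtain ⟨D, hD, hDmin⟩ : ∃ D ∈ ((suppFin u).powerset.filter
          (fun D => ¬ LinearIndependent 𝔽 (fun F : {x // x ∈ D} => bvec 𝔽 n k F.1))), ∀ x ∈ ((suppFin u).powerset.filter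
          (fun D => ¬ LinearIndependent 𝔽 (fun F : {x // x ∈ D} => bvec 𝔽 n k F.1))), ¬ x < D := by
        obtain ⟨D, hD⟩ := Finset.exists_minimal hTne
        exact ⟨D, hD.prop, fun x hx hlt => lt_irrefl _ (lt_of_lt_of_le hlt (hD.2 hx hlt.le))⟩
      obtain ⟨hDsub', hDdep⟩ := Finset.mem_filter.1 hD
      have hDsub : D ⊆ suppFin u := Finset.mem_powerset.1 hDsub'
      have hDcirc : SimCircuit 𝔽 n k G D := by
        refine ⟨hDsub.trans (suppFin_subset u), hDdep, ?_⟩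
        intro C' hC'
        by_contra hdep'
        exact hDmin C' (Finset.mem_filter.2
          ⟨Finset.mem_powerset.2 (hC'.subset.trans hDsub), hdep'⟩)
          (Finset.lt_iff_ssubset.2 hC')
      obtain ⟨s1, idx1, a1, d, ha1, hdsupp, hdsum, hdunion⟩ := hcirc D hDcirc
      have hDne : D.Nonempty := by
        rcases Finset.eq_empty_or_nonempty D with rfl | h
        · exfalso
          apply hDdep
          have : IsEmpty (↥(∅ : Finset (Finset (Fin n)))) :=
            ⟨fun x => Finset.notMem_empty _ x.2⟩
          exact linearIndependent_empty_type
        · exact h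
      obtain ⟨F1, hF1⟩ := hDne
      have hF1u : F1 ∈ suppFin u := hDsub hF1
      have hdF1 : ex0 d F1 ≠ 0 := (mem_suppFin_iff.1 (hdsupp ▸ hF1)).2
      set cc := ex0 u F1 / ex0 d F1 with hcc
      set u' := u - cc • d with hu'
      have hu'supp : suppFin u' ⊆ (suppFin u).erase F1 := by
        intro F hF
        obtain ⟨hFG, hFne⟩ := mem_suppFin_iff.1 hF
        rw [Finset.mem_erase]
        constructor
        · rintro rfl
          apply hFne
          rw [hu', ex0_sub, ex0_smul, hcc, div_mul_cancel₀ _ hdF1, sub_self]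
        · by_contra hFu
          apply hFne
          have h1 : ex0 u F = 0 := ex0_eq_zero_of_not_mem_suppFin hFu
          have h2 : ex0 d F = 0 := ex0_eq_zero_of_not_mem_suppFin (by
            rw [hdsupp]
            exact fun hc => hFu (hDsub hc))
          rw [hu', ex0_sub, ex0_smul, h1, h2, mul_zero, sub_zero]
      have hu'card : (suppFin u').card ≤ N := by
        have h1 := Finset.card_le_card hu'supp
        have h2 : ((suppFin u).erase F1).card = (suppFin u).card - 1 :=
          Finset.card_erase_of_mem hF1u
        have h3 : 0 < (suppFin u).card := Finset.card_pos.2 ⟨F1, hF1u⟩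
        omega
      have hu'ker : bdryMap 𝔽 n k G u' = 0 := by
        rw [hu', map_sub, map_smul, hker]
        have hd : bdryMap 𝔽 n k G d = 0 := by
          rw [hdsum, map_sum]
          apply Finset.sum_eq_zero
          intro j _
          rw [map_smul, hXker, smul_zero]
        rw [hd, smul_zero, sub_zero]
      obtain ⟨s2, idx2, a2, ha2, hsum2, hunion2⟩ := ihN u' hu'card hu'ker
      -- combine
      refine ⟨s2 + s1, Fin.addCases idx2 idx1, Fin.addCases a2 (fun j => cc * a1 j), ?_, ?_, ?_⟩
      · intro j
        refine Fin.addCases (fun j1 => ?_) (fun j2 => ?_) j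
        · simp only [Fin.addCases_left]
          exact ha2 j1
        · simp only [Fin.addCases_right]
          exact mul_ne_zero (div_ne_zero (mem_suppFin_iff.1 hF1u).2 hdF1) (ha1 j2)
      · have : u = u' + cc • d := by rw [hu']; ring
        rw [this, hsum2, hdsum, Finset.smul_sum, Fin.sum_univ_add]
        simp only [Fin.addCases_left, Fin.addCases_right, smul_smul]
      · ext z
        simp only [Finset.mem_biUnion, Finset.mem_univ, true_and, id]
        constructor
        · rintro ⟨j, hj⟩
          revert hj
          refine Fin.addCases (fun j1 => ?_) (fun j2 => ?_) j <;> intro hj1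
          · simp only [Fin.addCases_left] at hj1
            have : z ∈ (suppFin u').biUnion id := by
              rw [← hunion2]
              exact Finset.mem_biUnion.2 ⟨j1, Finset.mem_univ _, hj1⟩
            obtain ⟨F, hF, hzF⟩ := Finset.mem_biUnion.1 this
            exact ⟨F, (Finset.mem_erase.1 (hu'supp hF)).2, hzF⟩
          · simp only [Fin.addCases_right] at hj1
            have : z ∈ D.biUnion id := by
              rw [hdunion]
              exact Finset.mem_biUnion.2 ⟨j2, Finset.mem_univ _, hj1⟩
            obtain ⟨F, hF, hzF⟩ := Finset.mem_biUnion.1 this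
            exact ⟨F, hDsub hF, hzF⟩
        · rintro ⟨F, hF, hzF⟩
          by_cases hFD : F ∈ D
          · have : z ∈ D.biUnion id := Finset.mem_biUnion.2 ⟨F, hFD, hzF⟩
            rw [hdunion] at this
            obtain ⟨j2, -, hj2⟩ := Finset.mem_biUnion.1 this
            exact ⟨Fin.natAdd s2 j2, by rwa [Fin.addCases_right]⟩
          · have hFu' : F ∈ suppFin u' := by
              rw [mem_suppFin_iff]
              refine ⟨suppFin_subset u hF, ?_⟩
              have h2 : ex0 d F = 0 := ex0_eq_zero_of_not_mem_suppFin (by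
                rw [hdsupp]; exact hFD)
              rw [hu', ex0_sub, ex0_smul, h2, mul_zero, sub_zero]
              exact (mem_suppFin_iff.1 hF).2
            have : z ∈ (suppFin u').biUnion id := Finset.mem_biUnion.2 ⟨F, hFu', hzF⟩
            rw [← hunion2] at this
            obtain ⟨j1, -, hj1⟩ := Finset.mem_biUnion.1 this
            exact ⟨Fin.castAdd s1 j1, by rwa [Fin.addCases_left]⟩

end Helpers


section Main

open Finset
open scoped Classical

variable {𝔽 : Type*} [Field 𝔽]

lemma main_induction (n k : ℕ) (hk : 2 ≤ k) :
    ∀ (r : ℕ) (Sk : Finset (Finset (Fin n))), (∀ F ∈ Sk, F.card = k) →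
      simRank 𝔽 n k Sk = r → DPerfect 𝔽 n k Sk → StronglyTriangulable 𝔽 n k Sk := by
  intro r
  induction r with
  | zero =>
    intro Sk hSk hrank _
    have hempty : Sk = ∅ := by
      rw [Finset.eq_empty_iff_forall_notMem]
      intro F hF
      have hFc := hSk F hF
      have hFne : F.Nonempty := Finset.card_pos.1 (by omega)
      obtain ⟨i, hi⟩ := hFne
      have hcard : (F.erase i).card = k - 1 := by rw [Finset.card_erase_of_mem hi, hFc]
      have hb : bvec 𝔽 n k F ⟨F.erase i, hcard⟩ ≠ 0 := by
        show ((inc (F.erase i) F : ℤ) : 𝔽) ≠ 0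
        apply (int_cast_inc_ne_zero_iff ?_).2 (Finset.erase_subset _ _)
        rw [hcard, hFc]; omega
      have hmem : bvec 𝔽 n k F ∈ Submodule.span 𝔽
          ((fun G => bvec 𝔽 n k G) '' (Sk : Set (Finset (Fin n)))) :=
        Submodule.subset_span ⟨F, by exact_mod_cast hF, rfl⟩
      have hbot : Submodule.span 𝔽
          ((fun G => bvec 𝔽 n k G) '' (Sk : Set (Finset (Fin n)))) = ⊥ :=
        Submodule.finrank_eq_zero.1 hrank
      rw [hbot, Submodule.mem_bot] at hmem
      rw [hmem] at hb
      exact hb rfl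
    subst hempty
    haveI hss : Subsingleton (↥(∅ : Finset (Finset (Fin n))) → 𝔽) :=
      ⟨fun f g => funext fun x => absurd x.2 (Finset.notMem_empty _)⟩
    refine ⟨0, Fin.elim0, fun i => i.elim0, ?_, ?_⟩
    · ext v
      have hv : v = 0 := Subsingleton.elim v 0
      subst hv
      simp
    · intro C hC
      exfalso
      have hC0 : C = ∅ := Finset.subset_empty.1 hC.1
      subst hC0
      apply hC.2.1
      haveI : IsEmpty (↥(∅ : Finset (Finset (Fin n)))) := ⟨fun x => Finset.notMem_empty _ x.2⟩
      exact linearIndependent_empty_type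
  | succ r ih =>
    intro Sk hSk hrank hD
    obtain ⟨V, ⟨-, hVcard, hcocirc⟩, hsimp⟩ := hD
    rw [hrank] at hVcard hcocirc hsimp
    have h0r : 0 < r + 1 := Nat.succ_pos r
    have hV0c : (V 0).card = k - 1 := hVcard 0 h0r
    have hsimp0 : SimplicialFace k Sk (V 0) := hsimp 0 h0r
    obtain ⟨X, ⟨hXfacet, hVX⟩, hXuniq⟩ := hsimp0
    have hk1 : 1 ≤ k := by omega
    set E := suppδ 𝔽 Sk (V 0) with hEdef
    have hEfilter : E = Sk.filter (fun F => V 0 ⊆ F) := suppδ_eq_filter hSk hV0c hk1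
    have hmemE : ∀ {F}, F ∈ E ↔ F ∈ Sk ∧ V 0 ⊆ F := by
      intro F; rw [hEfilter, Finset.mem_filter]
    have hEsubSk : E ⊆ Sk := suppδ_subset _ _
    have hXcard : k ≤ X.card := by
      have h1 := Finset.card_lt_card hVX
      omega
    have hXall : ∀ G ⊆ X, G.card = k → G ∈ Sk := face_ksubsets hXfacet.1 hXcard
    have hV0X : V 0 ⊆ X := hVX.subset
    have hFX : ∀ F ∈ Sk, V 0 ⊆ F → F ⊆ X := by
      intro F hF hVF
      obtain ⟨Y, hYfacet, hFY⟩ := exists_facet_sup (isFace_of_mem hSk hF)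
      have hVFss : V 0 ⊂ F := Finset.ssubset_iff_subset_ne.2 ⟨hVF, by
        intro h
        have h2 := hSk F hF
        rw [← h, hV0c] at h2
        omega⟩
      have hYX : Y = X := hXuniq Y ⟨hYfacet, Finset.ssubset_of_ssubset_of_subset hVFss hFY⟩
      exact hYX ▸ hFY
    have hinsCard : ∀ x, x ∉ V 0 → (insert x (V 0)).card = k := by
      intro x hxV; rw [Finset.card_insert_of_notMem hxV, hV0c]; omega
    have hinsE : ∀ x ∈ X, x ∉ V 0 → insert x (V 0) ∈ E := by
      intro x hx hxV
      exact hmemE.2 ⟨hXall _ (Finset.insert_subset hx hV0X) (hinsCard x hxV),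
        Finset.subset_insert _ _⟩
    have hEshape : ∀ F ∈ E, ∃ x, x ∈ X ∧ x ∉ V 0 ∧ F = insert x (V 0) := by
      intro F hF
      obtain ⟨hFSk, hVF⟩ := hmemE.1 hF
      obtain ⟨i, hi, hVe⟩ := exists_erase_of_subset hVF (by rw [hV0c, hSk F hFSk]; omega)
      refine ⟨i, hFX F hFSk hVF hi, by rw [hVe]; exact Finset.notMem_erase _ _, ?_⟩
      rw [hVe, Finset.insert_erase hi]
    -- the rank of the deletion
    have hco : SimCocircuit 𝔽 n k Sk E := by
      have h := hcocirc 0 h0r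
      have hC : Cstar 𝔽 Sk V 0 = E := by
        rw [hEdef]
        unfold Cstar
        simp
      rw [hC] at h
      exact h
    obtain ⟨hEsub', hlt, hmin⟩ := hco
    have hEne : E.Nonempty := by
      rcases Finset.eq_empty_or_nonempty E with h | h
      · rw [h, Finset.sdiff_empty] at hlt; omega
      · exact h
    obtain ⟨e0, he0⟩ := hEne
    set Sk' := Sk \ E with hSk'def
    have hsub' : Sk' ⊆ Sk := Finset.sdiff_subset
    have hrank' : simRank 𝔽 n k Sk' = r := by
      have h1 : simRank 𝔽 n k (Sk \ E.erase e0) = r + 1 := by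
        rw [hmin (E.erase e0) (Finset.erase_ssubset he0), hrank]
      have h2 : Sk \ E.erase e0 = insert e0 Sk' := by
        ext F
        rw [Finset.mem_sdiff, Finset.mem_insert, Finset.mem_sdiff, Finset.mem_erase]
        constructor
        · rintro ⟨hFSk, hne⟩
          by_cases hFE : F ∈ E
          · left
            by_contra hne'
            exact hne ⟨hne', hFE⟩
          · right; exact ⟨hFSk, hFE⟩
        · rintro (rfl | ⟨hFSk, hFE⟩)
          · exact ⟨hEsubSk he0, fun h => h.1 rfl⟩
          · exact ⟨hFSk, fun h => hFE h.2⟩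
      have h3 := simRank_insert_le (𝔽 := 𝔽) (n := n) (k := k) Sk' e0
      have h4 : simRank 𝔽 n k Sk' ≤ r := by
        rw [hrank] at hlt
        omega
      rw [h2] at h1
      omega
    have hDP' : DPerfect 𝔽 n k Sk' := by
      refine ⟨fun i => V (i + 1), ⟨rfl, ?_, ?_⟩, ?_⟩
      · intro j hj
        rw [hrank'] at hj
        exact hVcard (j + 1) (by omega)
      · intro j hj
        rw [hrank'] at hj
        have h := hcocirc (j + 1) (by omega)
        rw [← delSeq_eq_shift, ← Cstar_shift] at h
        exact h
      · intro j hj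
        rw [hrank'] at hj
        have h := hsimp (j + 1) (by omega)
        rw [← delSeq_eq_shift] at h
        exact h
    have hSk'cards : ∀ F ∈ Sk', F.card = k := fun F hF => hSk F (hsub' hF)
    obtain ⟨m'', Xs'', hfaces'', hspan'', hcirc''⟩ := ih Sk' hSk'cards hrank' hDP'
    -- the new (k+1)-faces
    set D := X \ V 0 with hDdef
    have hDne : D.Nonempty := by
      obtain ⟨x, hx, hxV⟩ := Finset.exists_of_ssubset hVX
      exact ⟨x, Finset.mem_sdiff.2 ⟨hx, hxV⟩⟩
    set P := (D ×ˢ D).filter (fun p => p.1 ≠ p.2) with hPdef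
    set Xs : Fin (m'' + P.card) → Finset (Fin n) :=
      Fin.addCases (fun i => Xs'' i)
        (fun j => insert (P.equivFin.symm j).1.1 (insert (P.equivFin.symm j).1.2 (V 0)))
      with hXsdef
    have hpair : ∀ x ∈ D, ∀ y ∈ D, x ≠ y →
        (insert x (insert y (V 0))).card = k + 1 ∧ insert x (insert y (V 0)) ⊆ X := by
      intro x hx y hy hxy
      obtain ⟨hxX, hxV⟩ := Finset.mem_sdiff.1 hx
      obtain ⟨hyX, hyV⟩ := Finset.mem_sdiff.1 hy
      constructor
      · rw [Finset.card_insert_of_notMem (by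
          rw [Finset.mem_insert]
          rintro (h | h)
          · exact hxy h
          · exact hxV h), hinsCard y hyV]
      · exact Finset.insert_subset hxX (Finset.insert_subset hyX hV0X)
    have hpairFaceSk : ∀ x ∈ D, ∀ y ∈ D, x ≠ y →
        ∀ G ⊆ insert x (insert y (V 0)), G.card = k → G ∈ Sk := by
      intro x hx y hy hxy G hG hGc
      exact hXall G (hG.trans (hpair x hx y hy hxy).2) hGc
    have hfaceXs : ∀ i, (Xs i).card = k + 1 ∧ (∀ G ⊆ Xs i, G.card = k → G ∈ Sk) := by
      intro i
      induction i using Fin.addCases with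
      | left i =>
        rw [show Xs (Fin.castAdd P.card i) = Xs'' i from by rw [hXsdef]; exact Fin.addCases_left i]
        refine ⟨(hfaces'' i).1, fun G hG hGc => hsub' ?_⟩
        exact face_ksubsets (hfaces'' i).2 (by rw [(hfaces'' i).1]; omega) G hG hGc
      | right j =>
        rw [show Xs (Fin.natAdd m'' j)
            = insert (P.equivFin.symm j).1.1 (insert (P.equivFin.symm j).1.2 (V 0)) from by
          rw [hXsdef]; exact Fin.addCases_right j]
        obtain ⟨hprod, hne⟩ := Finset.mem_filter.1 (P.equivFin.symm j).2
        obtain ⟨h1, h2⟩ := Finset.mem_product.1 hprod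
        exact ⟨(hpair _ h1 _ h2 hne).1, hpairFaceSk _ h1 _ h2 hne⟩
    have hXkerAll : ∀ i, bdryMap 𝔽 n k Sk (pbdry 𝔽 Sk (Xs i)) = 0 :=
      fun i => bdryMap_pbdry Sk (hfaceXs i).1 (hfaceXs i).2
    have hXker'' : ∀ i, bdryMap 𝔽 n k Sk' (pbdry 𝔽 Sk' (Xs'' i)) = 0 :=
      fun i => bdryMap_pbdry Sk' (hfaces'' i).1
        (face_ksubsets (hfaces'' i).2 (by rw [(hfaces'' i).1]; omega))
    have herase'' : ∀ (i : Fin m''), ∀ i0 ∈ Xs'' i, (Xs'' i).erase i0 ∈ Sk' := by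
      intro i i0 hi0
      refine face_ksubsets (hfaces'' i).2 (by rw [(hfaces'' i).1]; omega) _
        (Finset.erase_subset _ _) ?_
      rw [Finset.card_erase_of_mem hi0, (hfaces'' i).1]
      omega
    have hXsLeft : ∀ (i : Fin m''), Xs (Fin.castAdd P.card i) = Xs'' i := by
      intro i; rw [hXsdef]; exact Fin.addCases_left i
    have hpbdryLeft : ∀ (i : Fin m''),
        pbdry 𝔽 Sk (Xs (Fin.castAdd P.card i)) = extV hsub' (pbdry 𝔽 Sk' (Xs'' i)) := by
      intro i
      rw [hXsLeft i]
      exact pbdry_eq_extV hsub' (Xs'' i) (herase'' i)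
    have hXsPair : ∀ (x y : Fin n) (hp : (x, y) ∈ P),
        Xs (Fin.natAdd m'' (P.equivFin ⟨(x, y), hp⟩)) = insert x (insert y (V 0)) := by
      intro x y hp
      rw [hXsdef]
      simp only [Fin.addCases_right, Equiv.symm_apply_apply]
    have hmemP : ∀ x ∈ D, ∀ y ∈ D, x ≠ y → ((x, y) : Fin n × Fin n) ∈ P := by
      intro x hx y hy hxy
      exact Finset.mem_filter.2 ⟨Finset.mem_product.2 ⟨hx, hy⟩, hxy⟩
    -- the pair-face coordinate computations
    have hcoord1 : ∀ x, x ∉ V 0 → ∀ y, y ∉ V 0 → x ≠ y →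
        ((inc (insert y (V 0)) (insert x (insert y (V 0))) : ℤ) : 𝔽) ≠ 0 := by
      intro x hxV y hyV hxy
      have h2 : (insert x (insert y (V 0))).card = k + 1 := by
        rw [Finset.card_insert_of_notMem (by
          rw [Finset.mem_insert]
          rintro (h | h)
          · exact hxy h
          · exact hxV h), hinsCard y hyV]
      exact (int_cast_inc_ne_zero_iff (by rw [hinsCard y hyV, h2])).2
        (Finset.subset_insert _ _)
    have hcoord0 : ∀ x y z : Fin n, z ∉ V 0 → z ≠ x → z ≠ y →
        inc (insert z (V 0)) (insert x (insert y (V 0))) = 0 := by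
      intro x y z hzV hzx hzy
      apply inc_eq_zero
      intro i hi h
      have hz : z ∈ (insert x (insert y (V 0))).erase i := by
        rw [← h]; exact Finset.mem_insert_self z (V 0)
      have hz2 := (Finset.mem_erase.1 hz).2
      rcases Finset.mem_insert.1 hz2 with h1 | h1
      · exact hzx h1
      · rcases Finset.mem_insert.1 h1 with h2 | h2
        · exact hzy h2
        · exact hzV h2
    have hpbE : ∀ (W : Finset (Fin n)) {G : Finset (Fin n)}, G ∈ Sk →
        ex0 (pbdry 𝔽 Sk W) G = ((inc G W : ℤ) : 𝔽) := by
      intro W G hG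
      rw [show ex0 (pbdry 𝔽 Sk W) G = pbdry 𝔽 Sk W ⟨G, hG⟩ from dif_pos hG]
      rfl
    -- the weighted sum over E of any kernel vector vanishes
    have hsumE : ∀ u : ↥Sk → 𝔽, bdryMap 𝔽 n k Sk u = 0 →
        ∑ G ∈ E, ex0 u G * ((inc (V 0) G : ℤ) : 𝔽) = 0 := by
      intro u hu
      have h0 : bdryMap 𝔽 n k Sk u ⟨V 0, hV0c⟩ = 0 := by rw [hu]; rfl
      rw [bdryMap_eq_sum', Finset.sum_apply] at h0
      have hSkSum : ∑ G ∈ Sk, ex0 u G * ((inc (V 0) G : ℤ) : 𝔽) = 0 := by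
        rw [← h0]
        exact Finset.sum_congr rfl fun G hG => by
          rw [Pi.smul_apply, smul_eq_mul]; rfl
      rw [← hSkSum]
      apply Finset.sum_subset hEsubSk
      intro G hG hGE
      have hz : ((inc (V 0) G : ℤ) : 𝔽) = 0 := by
        by_contra hne
        exact hGE (mem_suppδ.2 ⟨hG, hne⟩)
      rw [hz, mul_zero]
    -- collapse: a kernel vector vanishing on E except possibly at insert x0 V0 vanishes there too
    have hcollapse : ∀ (u : ↥Sk → 𝔽), bdryMap 𝔽 n k Sk u = 0 → ∀ x0, x0 ∈ D →
        (∀ y ∈ D, y ≠ x0 → ex0 u (insert y (V 0)) = 0) → ex0 u (insert x0 (V 0)) = 0 := by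
      intro u hu x0 hx0 hvanish
      have hs := hsumE u hu
      obtain ⟨hx0X, hx0V⟩ := Finset.mem_sdiff.1 hx0
      have hx0E : insert x0 (V 0) ∈ E := hinsE x0 hx0X hx0V
      rw [Finset.sum_eq_single_of_mem (insert x0 (V 0)) hx0E (by
        intro G hGE hGne
        obtain ⟨y, hyX, hyV, rfl⟩ := hEshape G hGE
        have hyD : y ∈ D := Finset.mem_sdiff.2 ⟨hyX, hyV⟩
        have hyx : y ≠ x0 := by rintro rfl; exact hGne rfl
        rw [hvanish y hyD hyx, zero_mul])] at hs
      have hne : ((inc (V 0) (insert x0 (V 0)) : ℤ) : 𝔽) ≠ 0 :=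
        (int_cast_inc_ne_zero_iff (by rw [hinsCard x0 hx0V, hV0c]; omega)).2
          (Finset.subset_insert _ _)
      exact (mul_eq_zero.1 hs).resolve_right hne
    -- the elimination step
    have helim : ∀ (u : ↥Sk → 𝔽), bdryMap 𝔽 n k Sk u = 0 → ∀ x0, x0 ∈ D →
        ∀ S : Finset (Fin n), S ⊆ D.erase x0 →
        (∀ y ∈ D, y ≠ x0 → y ∉ S → ex0 u (insert y (V 0)) = 0) →
        bdryMap 𝔽 n k Sk (u - ∑ y ∈ S,
          (ex0 u (insert y (V 0)) /
            ((inc (insert y (V 0)) (insert x0 (insert y (V 0))) : ℤ) : 𝔽)) •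
          pbdry 𝔽 Sk (insert x0 (insert y (V 0)))) = 0 ∧
        ∀ G ∈ E, ex0 (u - ∑ y ∈ S,
          (ex0 u (insert y (V 0)) /
            ((inc (insert y (V 0)) (insert x0 (insert y (V 0))) : ℤ) : 𝔽)) •
          pbdry 𝔽 Sk (insert x0 (insert y (V 0)))) G = 0 := by
      intro u hu x0 hx0 S hSsub hvan
      obtain ⟨hx0X, hx0V⟩ := Finset.mem_sdiff.1 hx0
      have hSD : ∀ y ∈ S, y ∈ D ∧ y ≠ x0 := by
        intro y hy
        have := hSsub hy
        rw [Finset.mem_erase] at this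
        exact ⟨this.2, this.1⟩
      have hker2 : bdryMap 𝔽 n k Sk (u - ∑ y ∈ S,
          (ex0 u (insert y (V 0)) /
            ((inc (insert y (V 0)) (insert x0 (insert y (V 0))) : ℤ) : 𝔽)) •
          pbdry 𝔽 Sk (insert x0 (insert y (V 0)))) = 0 := by
        rw [map_sub, hu, map_sum, zero_sub, neg_eq_zero]
        apply Finset.sum_eq_zero
        intro y hy
        obtain ⟨hyD, hyx⟩ := hSD y hy
        rw [map_smul, bdryMap_pbdry Sk (hpair x0 hx0 y hyD (Ne.symm hyx)).1
          (hpairFaceSk x0 hx0 y hyD (Ne.symm hyx)), smul_zero]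
      refine ⟨hker2, ?_⟩
      -- vanishing at non-x0 coordinates of E
      have hvanish2 : ∀ y ∈ D, y ≠ x0 → ex0 (u - ∑ y ∈ S,
          (ex0 u (insert y (V 0)) /
            ((inc (insert y (V 0)) (insert x0 (insert y (V 0))) : ℤ) : 𝔽)) •
          pbdry 𝔽 Sk (insert x0 (insert y (V 0)))) (insert y (V 0)) = 0 := by
        intro y hyD hyx
        obtain ⟨hyX, hyV⟩ := Finset.mem_sdiff.1 hyD
        have hySk : insert y (V 0) ∈ Sk := hEsubSk (hinsE y hyX hyV)
        rw [ex0_sub, ex0_sum]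
        by_cases hyS : y ∈ S
        · rw [Finset.sum_eq_single_of_mem y hyS (by
            intro y' hy' hy'ne
            obtain ⟨hy'D, hy'x⟩ := hSD y' hy'
            rw [ex0_smul, hpbE _ hySk]
            rw [hcoord0 x0 y' y hyV hyx hy'ne.symm]  -- careful: need y ≠ y'
            norm_num)]
          rw [ex0_smul, hpbE _ hySk, div_mul_cancel₀ _ (hcoord1 x0 hx0V y hyV (Ne.symm hyx)),
            sub_self]
        · have hcoordz : ex0 u (insert y (V 0)) = 0 := hvan y hyD hyx hyS
          rw [hcoordz]
          rw [Finset.sum_eq_zero (fun y' hy' => by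
            obtain ⟨hy'D, hy'x⟩ := hSD y' hy'
            have hyy' : y ≠ y' := by rintro rfl; exact hyS hy'
            rw [ex0_smul, hpbE _ hySk, hcoord0 x0 y' y hyV hyx hyy']
            norm_num)]
          rw [sub_zero]
      intro G hGE
      obtain ⟨z, hzX, hzV, rfl⟩ := hEshape G hGE
      have hzD : z ∈ D := Finset.mem_sdiff.2 ⟨hzX, hzV⟩
      by_cases hzx : z = x0
      · subst hzx
        exact hcollapse _ hker2 z hzD hvanish2
      · exact hvanish2 z hzD hzx
    -- span equality
    have hspan : Submodule.span 𝔽 (Set.range fun i => pbdry 𝔽 Sk (Xs i))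
        = LinearMap.ker (bdryMap 𝔽 n k Sk) := by
      apply le_antisymm
      · rw [Submodule.span_le]
        rintro _ ⟨i, rfl⟩
        rw [SetLike.mem_coe, LinearMap.mem_ker]
        exact hXkerAll i
      · intro v hv
        rw [LinearMap.mem_ker] at hv
        obtain ⟨x0, hx0D⟩ := hDne
        set S := (D.erase x0).filter (fun y => ex0 v (insert y (V 0)) ≠ 0) with hSdef
        have hSsub : S ⊆ D.erase x0 := Finset.filter_subset _ _
        have hvan : ∀ y ∈ D, y ≠ x0 → y ∉ S → ex0 v (insert y (V 0)) = 0 := by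
          intro y hyD hyx hyS
          by_contra hne
          exact hyS (Finset.mem_filter.2 ⟨Finset.mem_erase.2 ⟨hyx, hyD⟩, hne⟩)
        obtain ⟨hwker, hwE⟩ := helim v hv x0 hx0D S hSsub hvan
        set w := v - ∑ y ∈ S,
          (ex0 v (insert y (V 0)) /
            ((inc (insert y (V 0)) (insert x0 (insert y (V 0))) : ℤ) : 𝔽)) •
          pbdry 𝔽 Sk (insert x0 (insert y (V 0))) with hwdef
        have hsupp : suppFin w ⊆ Sk' := by
          intro F hF
          obtain ⟨hFSk, hFne⟩ := mem_suppFin_iff.1 hF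
          exact Finset.mem_sdiff.2 ⟨hFSk, fun hFE => hFne (hwE F hFE)⟩
        have hres_ker : bdryMap 𝔽 n k Sk' (fun F : ↥Sk' => w ⟨F.1, hsub' F.2⟩) = 0 := by
          rw [← bdryMap_extV hsub', extV_res hsub' w hsupp]
          exact hwker
        have hres_mem : (fun F : ↥Sk' => w ⟨F.1, hsub' F.2⟩) ∈
            Submodule.span 𝔽 (Set.range fun i => pbdry 𝔽 Sk' (Xs'' i)) := by
          rw [hspan'']
          exact LinearMap.mem_ker.2 hres_ker
        have hw_mem : w ∈ Submodule.span 𝔽 (Set.range fun i => pbdry 𝔽 Sk (Xs i)) := by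
          have h1 : w ∈ Submodule.map (extV hsub')
              (Submodule.span 𝔽 (Set.range fun i => pbdry 𝔽 Sk' (Xs'' i))) :=
            ⟨_, hres_mem, extV_res hsub' w hsupp⟩
          rw [Submodule.map_span] at h1
          refine Submodule.span_mono ?_ h1
          rintro _ ⟨_, ⟨i, rfl⟩, rfl⟩
          exact ⟨Fin.castAdd P.card i, (hpbdryLeft i).symm ▸ rfl⟩
        have hcorr_mem : (∑ y ∈ S,
            (ex0 v (insert y (V 0)) /
              ((inc (insert y (V 0)) (insert x0 (insert y (V 0))) : ℤ) : 𝔽)) •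
            pbdry 𝔽 Sk (insert x0 (insert y (V 0)))) ∈
            Submodule.span 𝔽 (Set.range fun i => pbdry 𝔽 Sk (Xs i)) := by
          apply Submodule.sum_mem
          intro y hy
          apply Submodule.smul_mem
          have hyD : y ∈ D := (Finset.mem_erase.1 (hSsub hy)).2
          have hyx : y ≠ x0 := (Finset.mem_erase.1 (hSsub hy)).1
          apply Submodule.subset_span
          refine ⟨Fin.natAdd m'' (P.equivFin ⟨(x0, y), hmemP x0 hx0D y hyD (Ne.symm hyx)⟩), ?_⟩
          show pbdry 𝔽 Sk (Xs (Fin.natAdd m''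
            (P.equivFin ⟨(x0, y), hmemP x0 hx0D y hyD (Ne.symm hyx)⟩)))
            = pbdry 𝔽 Sk (insert x0 (insert y (V 0)))
          rw [hXsPair]
        have hv_eq : v = w + ∑ y ∈ S,
            (ex0 v (insert y (V 0)) /
              ((inc (insert y (V 0)) (insert x0 (insert y (V 0))) : ℤ) : 𝔽)) •
            pbdry 𝔽 Sk (insert x0 (insert y (V 0))) := by
          rw [hwdef]; ring
        rw [hv_eq]
        exact Submodule.add_mem _ hw_mem hcorr_mem
    refine ⟨m'' + P.card, Xs, fun i => ⟨(hfaceXs i).1, Or.inr (hfaceXs i).2⟩, hspan, ?_⟩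
    intro C hC
    obtain ⟨c, hcker, hcne, hcsupp⟩ := exists_circuit_vector hC
    by_cases hCE : ∀ F ∈ C, F ∉ E
    · -- the circuit avoids E : use the inductive data
      have hCsub' : C ⊆ Sk' := fun F hF => Finset.mem_sdiff.2 ⟨hC.1 hF, hCE F hF⟩
      obtain ⟨s, idx, a, Cv, ha, hCvsupp, hCvsum, hCunion⟩ := hcirc'' C ⟨hCsub', hC.2.1, hC.2.2⟩
      refine ⟨s, fun j => Fin.castAdd P.card (idx j), a, extV hsub' Cv, ha, ?_, ?_, ?_⟩
      · rw [suppFin_extV]; exact hCvsupp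
      · rw [hCvsum, map_sum]
        refine Finset.sum_congr rfl fun j _ => ?_
        rw [map_smul, hpbdryLeft (idx j)]
      · rw [hCunion]
        apply Finset.biUnion_congr rfl
        intro j _
        exact (hXsLeft (idx j)).symm
    · -- the circuit meets E
      push_neg at hCE
      obtain ⟨F0, hF0C, hF0E⟩ := hCE
      obtain ⟨x0, hx0X, hx0V, hF0eq⟩ := hEshape F0 hF0E
      subst hF0eq
      have hx0D : x0 ∈ D := Finset.mem_sdiff.2 ⟨hx0X, hx0V⟩
      set S := (D.erase x0).filter (fun y => ex0 c (insert y (V 0)) ≠ 0) with hSdef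
      have hSsub : S ⊆ D.erase x0 := Finset.filter_subset _ _
      have hSD : ∀ y ∈ S, y ∈ D ∧ y ≠ x0 := by
        intro y hy
        have h := Finset.mem_erase.1 (hSsub hy)
        exact ⟨h.2, h.1⟩
      have hvan : ∀ y ∈ D, y ≠ x0 → y ∉ S → ex0 c (insert y (V 0)) = 0 := by
        intro y hyD hyx hyS
        by_contra hne
        exact hyS (Finset.mem_filter.2 ⟨Finset.mem_erase.2 ⟨hyx, hyD⟩, hne⟩)
      obtain ⟨hwker, hwE⟩ := helim c hcker x0 hx0D S hSsub hvan
      set w := c - ∑ y ∈ S, (ex0 c (insert y (V 0)) /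
          ((inc (insert y (V 0)) (insert x0 (insert y (V 0))) : ℤ) : 𝔽)) •
          pbdry 𝔽 Sk (insert x0 (insert y (V 0))) with hwdef
      have hmemC : ∀ {G}, G ∈ Sk → (G ∈ C ↔ ex0 c G ≠ 0) := by
        intro G hG
        rw [← hcsupp, mem_suppFin_iff]
        constructor
        · rintro ⟨-, h⟩; exact h
        · intro h; exact ⟨hG, h⟩
      have hcF0 : ex0 c (insert x0 (V 0)) ≠ 0 := (hmemC (hC.1 hF0C)).1 hF0C
      have hx0E : insert x0 (V 0) ∈ E := hinsE x0 hx0X hx0V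
      have hyC : ∀ y ∈ S, insert y (V 0) ∈ C := by
        intro y hy
        obtain ⟨hyD, -⟩ := hSD y hy
        obtain ⟨hyX, hyV⟩ := Finset.mem_sdiff.1 hyD
        exact (hmemC (hEsubSk (hinsE y hyX hyV))).2 (Finset.mem_filter.1 hy).2
      have hSne : S.Nonempty := by
        rcases Finset.eq_empty_or_nonempty S with hS0 | h
        · exfalso
          apply hcF0
          have hw_eq : w = c := by rw [hwdef, hS0, Finset.sum_empty, sub_zero]
          have h2 := hwE (insert x0 (V 0)) hx0E
          rwa [hw_eq] at h2
        · exact h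
      have hsupp : suppFin w ⊆ Sk' := by
        intro F hF
        obtain ⟨hFSk, hFne⟩ := mem_suppFin_iff.1 hF
        exact Finset.mem_sdiff.2 ⟨hFSk, fun hFE => hFne (hwE F hFE)⟩
      have hres_ker : bdryMap 𝔽 n k Sk' (fun F : ↥Sk' => w ⟨F.1, hsub' F.2⟩) = 0 := by
        rw [← bdryMap_extV hsub', extV_res hsub' w hsupp]
        exact hwker
      obtain ⟨s2, idx2, a2, ha2, hsum2, hunion2⟩ := decomp_rep hcirc'' hXker''
        (suppFin (fun F : ↥Sk' => w ⟨F.1, hsub' F.2⟩)).card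
        (fun F : ↥Sk' => w ⟨F.1, hsub' F.2⟩) le_rfl hres_ker
      have hsuppres : suppFin (fun F : ↥Sk' => w ⟨F.1, hsub' F.2⟩) = suppFin w :=
        suppFin_res hsub' w hsupp
      have hsum2' : w = ∑ j, a2 j • pbdry 𝔽 Sk (Xs (Fin.castAdd P.card (idx2 j))) := by
        rw [← extV_res hsub' w hsupp, hsum2, map_sum]
        refine Finset.sum_congr rfl fun j _ => ?_
        rw [map_smul, hpbdryLeft (idx2 j)]
      have hpS : ∀ (t : ↥S), ((x0, (t : Fin n)) : Fin n × Fin n) ∈ P := by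
        intro t
        obtain ⟨hyD, hyx⟩ := hSD t.1 t.2
        exact hmemP x0 hx0D t.1 hyD (Ne.symm hyx)
      have hXsIdxLeft : ∀ (t : ↥S),
          Xs (Fin.natAdd m'' (P.equivFin ⟨(x0, (t : Fin n)), hpS t⟩))
            = insert x0 (insert (t : Fin n) (V 0)) := fun t => hXsPair _ _ _
      have hcorr_support : ∀ F ∈ Sk, ex0 (∑ y ∈ S,
            (ex0 c (insert y (V 0)) /
              ((inc (insert y (V 0)) (insert x0 (insert y (V 0))) : ℤ) : 𝔽)) •
            pbdry 𝔽 Sk (insert x0 (insert y (V 0)))) F ≠ 0 →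
          ∃ y ∈ S, F ⊆ insert x0 (insert y (V 0)) := by
        intro F hFSk hne
        rw [ex0_sum] at hne
        have hex : ∃ y ∈ S, ex0 ((ex0 c (insert y (V 0)) /
            ((inc (insert y (V 0)) (insert x0 (insert y (V 0))) : ℤ) : 𝔽)) •
            pbdry 𝔽 Sk (insert x0 (insert y (V 0)))) F ≠ 0 := by
          by_contra hall
          push_neg at hall
          exact hne (Finset.sum_eq_zero hall)
        obtain ⟨y, hyS, hterm⟩ := hex
        refine ⟨y, hyS, ?_⟩
        rw [ex0_smul] at hterm
        have h2 := (mul_ne_zero_iff.1 hterm).2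
        rw [hpbE _ hFSk] at h2
        exact subset_of_inc_ne_zero (fun h0 => h2 (by rw [h0]; norm_num))
      -- the element of the union of a pair face lies in the union of C
      have hpaircover : ∀ y ∈ S, ∀ z ∈ insert x0 (insert y (V 0)), z ∈ C.biUnion id := by
        intro y hyS z hz
        rcases Finset.mem_insert.1 hz with rfl | hz1
        · exact Finset.mem_biUnion.2 ⟨insert z (V 0), hF0C, Finset.mem_insert_self _ _⟩
        · rcases Finset.mem_insert.1 hz1 with rfl | hz2
          · exact Finset.mem_biUnion.2 ⟨insert z (V 0), hyC z hyS, Finset.mem_insert_self _ _⟩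
          · exact Finset.mem_biUnion.2
              ⟨insert x0 (V 0), hF0C, Finset.mem_insert_of_mem hz2⟩
      refine ⟨S.card + s2,
        Fin.addCases
          (fun j => Fin.natAdd m'' (P.equivFin
            ⟨(x0, ((S.equivFin.symm j : ↥S) : Fin n)), hpS _⟩))
          (fun j => Fin.castAdd P.card (idx2 j)),
        Fin.addCases
          (fun j => ex0 c (insert ((S.equivFin.symm j : ↥S) : Fin n) (V 0)) /
            ((inc (insert ((S.equivFin.symm j : ↥S) : Fin n) (V 0))
              (insert x0 (insert ((S.equivFin.symm j : ↥S) : Fin n) (V 0))) : ℤ) : 𝔽))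
          (fun j => a2 j),
        c, ?_, hcsupp, ?_, ?_⟩
      · -- all coefficients are nonzero
        intro j
        induction j using Fin.addCases with
        | left j1 =>
          simp only [Fin.addCases_left]
          set t := (S.equivFin.symm j1 : ↥S)
          obtain ⟨hyD, hyx⟩ := hSD t.1 t.2
          obtain ⟨hyX, hyV⟩ := Finset.mem_sdiff.1 hyD
          exact div_ne_zero (Finset.mem_filter.1 t.2).2 (hcoord1 x0 hx0V t.1 hyV (Ne.symm hyx))
        | right j2 =>
          simp only [Fin.addCases_right]
          exact ha2 j2
      · -- the representation of the circuit vector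
        rw [Fin.sum_univ_add]
        simp only [Fin.addCases_left, Fin.addCases_right]
        have hleft : (∑ j : Fin S.card,
            (ex0 c (insert ((S.equivFin.symm j : ↥S) : Fin n) (V 0)) /
              ((inc (insert ((S.equivFin.symm j : ↥S) : Fin n) (V 0))
                (insert x0 (insert ((S.equivFin.symm j : ↥S) : Fin n) (V 0))) : ℤ) : 𝔽)) •
              pbdry 𝔽 Sk (Xs (Fin.natAdd m'' (P.equivFin
                ⟨(x0, ((S.equivFin.symm j : ↥S) : Fin n)), hpS _⟩))))
            = ∑ y ∈ S, (ex0 c (insert y (V 0)) /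
              ((inc (insert y (V 0)) (insert x0 (insert y (V 0))) : ℤ) : 𝔽)) •
              pbdry 𝔽 Sk (insert x0 (insert y (V 0))) := by
          rw [show (∑ j : Fin S.card,
              (ex0 c (insert ((S.equivFin.symm j : ↥S) : Fin n) (V 0)) /
                ((inc (insert ((S.equivFin.symm j : ↥S) : Fin n) (V 0))
                  (insert x0 (insert ((S.equivFin.symm j : ↥S) : Fin n) (V 0))) : ℤ) : 𝔽)) •
                pbdry 𝔽 Sk (Xs (Fin.natAdd m'' (P.equivFin
                  ⟨(x0, ((S.equivFin.symm j : ↥S) : Fin n)), hpS _⟩))))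
              = ∑ t : ↥S, (ex0 c (insert (t : Fin n) (V 0)) /
                ((inc (insert (t : Fin n) (V 0))
                  (insert x0 (insert (t : Fin n) (V 0))) : ℤ) : 𝔽)) •
                pbdry 𝔽 Sk (Xs (Fin.natAdd m'' (P.equivFin
                  ⟨(x0, (t : Fin n)), hpS t⟩))) from
            Equiv.sum_comp S.equivFin.symm (fun t : ↥S =>
              (ex0 c (insert (t : Fin n) (V 0)) /
                ((inc (insert (t : Fin n) (V 0))
                  (insert x0 (insert (t : Fin n) (V 0))) : ℤ) : 𝔽)) •
                pbdry 𝔽 Sk (Xs (Fin.natAdd m'' (P.equivFin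
                  ⟨(x0, (t : Fin n)), hpS t⟩))))]
          rw [Finset.sum_congr rfl (fun t (_ : t ∈ Finset.univ) => by rw [hXsIdxLeft t])]
          exact Finset.sum_coe_sort S (fun y => (ex0 c (insert y (V 0)) /
            ((inc (insert y (V 0)) (insert x0 (insert y (V 0))) : ℤ) : 𝔽)) •
            pbdry 𝔽 Sk (insert x0 (insert y (V 0))))
        rw [hleft, ← hsum2']
        rw [hwdef]
        ring
      · -- the union condition
        ext z
        simp only [Finset.mem_biUnion, Finset.mem_univ, true_and, id_eq]
        constructor
        · rintro ⟨F, hFC, hzF⟩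
          by_cases hFE : F ∈ E
          · obtain ⟨y, hyX, hyV, rfl⟩ := hEshape F hFE
            have hyD : y ∈ D := Finset.mem_sdiff.2 ⟨hyX, hyV⟩
            by_cases hyx : y = x0
            · subst hyx
              obtain ⟨y1, hy1⟩ := hSne
              refine ⟨Fin.castAdd s2 (S.equivFin ⟨y1, hy1⟩), ?_⟩
              simp only [Fin.addCases_left]
              rw [hXsIdxLeft (S.equivFin.symm (S.equivFin ⟨y1, hy1⟩))]
              simp only [Equiv.symm_apply_apply]
              rcases Finset.mem_insert.1 hzF with rfl | hzV
              · exact Finset.mem_insert_self _ _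
              · exact Finset.mem_insert_of_mem (Finset.mem_insert_of_mem hzV)
            · have hyS : y ∈ S := Finset.mem_filter.2
                ⟨Finset.mem_erase.2 ⟨hyx, hyD⟩, (hmemC (hC.1 hFC)).1 hFC⟩
              refine ⟨Fin.castAdd s2 (S.equivFin ⟨y, hyS⟩), ?_⟩
              simp only [Fin.addCases_left]
              rw [hXsIdxLeft (S.equivFin.symm (S.equivFin ⟨y, hyS⟩))]
              simp only [Equiv.symm_apply_apply]
              exact Finset.mem_insert_of_mem hzF
          · by_cases hFw : F ∈ suppFin w
            · have hz2 : z ∈ (suppFin (fun F : ↥Sk' => w ⟨F.1, hsub' F.2⟩)).biUnion id := by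
                rw [hsuppres]
                exact Finset.mem_biUnion.2 ⟨F, hFw, hzF⟩
              rw [← hunion2] at hz2
              obtain ⟨j2, -, hj2⟩ := Finset.mem_biUnion.1 hz2
              refine ⟨Fin.natAdd S.card j2, ?_⟩
              simp only [Fin.addCases_right]
              rw [hXsLeft]
              exact hj2
            · have hcF : ex0 c F ≠ 0 := (hmemC (hC.1 hFC)).1 hFC
              have hwF : ex0 w F = 0 := by
                by_contra h
                exact hFw (mem_suppFin_iff.2 ⟨hC.1 hFC, h⟩)
              have hcorrF : ex0 (∑ y ∈ S, (ex0 c (insert y (V 0)) /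
                  ((inc (insert y (V 0)) (insert x0 (insert y (V 0))) : ℤ) : 𝔽)) •
                  pbdry 𝔽 Sk (insert x0 (insert y (V 0)))) F ≠ 0 := by
                intro h0
                apply hcF
                have h3 := hwF
                rw [hwdef, ex0_sub, h0, sub_zero] at h3
                exact h3
              obtain ⟨y, hyS, hFsub⟩ := hcorr_support F (hC.1 hFC) hcorrF
              refine ⟨Fin.castAdd s2 (S.equivFin ⟨y, hyS⟩), ?_⟩
              simp only [Fin.addCases_left]
              rw [hXsIdxLeft (S.equivFin.symm (S.equivFin ⟨y, hyS⟩))]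
              simp only [Equiv.symm_apply_apply]
              exact hFsub hzF
        · rintro ⟨j, hj⟩
          revert hj
          refine Fin.addCases (fun j1 => ?_) (fun j2 => ?_) j <;> intro hj
          · simp only [Fin.addCases_left] at hj
            rw [hXsIdxLeft (S.equivFin.symm j1)] at hj
            have hyS : ((S.equivFin.symm j1 : ↥S) : Fin n) ∈ S := (S.equivFin.symm j1).2
            have := hpaircover _ hyS z hj
            simpa only [Finset.mem_biUnion, id_eq] using this
          · simp only [Fin.addCases_right] at hj
            rw [hXsLeft] at hj
            have hz2 : z ∈ (suppFin (fun F : ↥Sk' => w ⟨F.1, hsub' F.2⟩)).biUnion id := by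
              rw [← hunion2]
              exact Finset.mem_biUnion.2 ⟨j2, Finset.mem_univ _, hj⟩
            rw [hsuppres] at hz2
            obtain ⟨F, hFw, hzF⟩ := Finset.mem_biUnion.1 hz2
            have hFSk : F ∈ Sk := suppFin_subset w hFw
            by_cases hFC : F ∈ C
            · exact ⟨F, hFC, hzF⟩
            · have hcF : ex0 c F = 0 := by
                by_contra h
                exact hFC ((hmemC hFSk).2 h)
              have hwFne : ex0 w F ≠ 0 := (mem_suppFin_iff.1 hFw).2
              have hcorrF : ex0 (∑ y ∈ S, (ex0 c (insert y (V 0)) /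
                  ((inc (insert y (V 0)) (insert x0 (insert y (V 0))) : ℤ) : 𝔽)) •
                  pbdry 𝔽 Sk (insert x0 (insert y (V 0)))) F ≠ 0 := by
                intro h0
                apply hwFne
                rw [hwdef, ex0_sub, hcF, h0, sub_zero]
              obtain ⟨y, hyS, hFsub⟩ := hcorr_support F hFSk hcorrF
              have := hpaircover y hyS z (hFsub hzF)
              simpa only [Finset.mem_biUnion, id_eq] using this

end Main

theorem stmt11 (𝔽 : Type*) [Field 𝔽] (n k : ℕ) (hk : 2 ≤ k) (hkn : k ≤ n)
    (Sk : Finset (Finset (Fin n))) (hSk : ∀ F ∈ Sk, F.card = k)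
    (hD : DPerfect 𝔽 n k Sk) : StronglyTriangulable 𝔽 n k Sk :=
  main_induction n k hk (simRank 𝔽 n k Sk) Sk hSk rfl hD
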